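/- arXiv:2409.03335 — 4 statements merged into one kernel-verified Lean document; each statement's English description precedes it below -/
import Mathlib

section
/- Let λ ∈ (0,1), let k be a positive integer, and let w ~ N(0, (k−1)/k). Then E[tanh(λ + √λ·w) − (1/2)·tanh²(λ + √λ·w)] ≤ (1/2)·(λ + 3√(λ/k)). -/
open MeasureTheory ProbabilityTheory
open scoped ENNReal NNReal

private lemma hasDerivAt_tanh' (x : ℝ) :
    HasDerivAt Real.tanh (1 / Real.cosh x ^ 2) x := by
  have h := (Real.hasDerivAt_sinh x).div (Real.hasDerivAt_cosh x) (Real.cosh_pos x).ne'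
  have he : (fun y => Real.sinh y / Real.cosh y) = Real.tanh := by
    funext y; rw [Real.tanh_eq_sinh_div_cosh]
  rw [show (Real.sinh / Real.cosh) = (fun y => Real.sinh y / Real.cosh y) from rfl, he] at h
  refine h.congr_deriv ?_
  have := Real.cosh_sq_sub_sinh_sq x
  congr 1
  nlinarith [Real.cosh_sq_sub_sinh_sq x]

private lemma tanh_lipschitz : LipschitzWith 1 Real.tanh := by
  apply lipschitzWith_of_nnnorm_deriv_le (fun x => (hasDerivAt_tanh' x).differentiableAt)
  intro x
  rw [(hasDerivAt_tanh' x).deriv, ← NNReal.coe_le_coe, coe_nnnorm, Real.norm_eq_abs]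
  have h1 : (1:ℝ) ≤ Real.cosh x := Real.one_le_cosh x
  push_cast
  rw [abs_of_pos (by positivity), div_le_one (by positivity)]
  nlinarith

private lemma tanh_sub_le (a b : ℝ) : |Real.tanh a - Real.tanh b| ≤ |a - b| := by
  have := tanh_lipschitz.dist_le_mul a b
  simpa [Real.dist_eq] using this

private lemma tanh_le_self {x : ℝ} (hx : 0 ≤ x) : Real.tanh x ≤ x := by
  have := tanh_sub_le x 0
  simp only [Real.tanh_zero, sub_zero] at this
  calc Real.tanh x ≤ |Real.tanh x| := le_abs_self _
    _ ≤ |x| := this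
    _ = x := abs_of_nonneg hx

private lemma abs_tanh_le_one (x : ℝ) : |Real.tanh x| ≤ 1 := by
  rw [Real.tanh_eq_sinh_div_cosh, abs_div, abs_of_pos (Real.cosh_pos x),
    div_le_one (Real.cosh_pos x), abs_le]
  constructor
  · nlinarith [Real.sinh_add_cosh x, Real.exp_pos x]
  · nlinarith [Real.cosh_sub_sinh x, Real.exp_pos (-x)]

private lemma tanh_eq_exp (x : ℝ) :
    Real.tanh x = (Real.exp (2*x) - 1) / (Real.exp (2*x) + 1) := by
  rw [Real.tanh_eq_sinh_div_cosh, Real.sinh_eq, Real.cosh_eq, two_mul, Real.exp_add,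
    Real.exp_neg]
  have h := Real.exp_pos x
  have h2 : Real.exp x * Real.exp x + 1 > 0 := by positivity
  field_simp

private lemma tanh_add_tanh_le {m : ℝ} (a : ℝ) (hm : 0 ≤ m) :
    Real.tanh (m + a) + Real.tanh (m - a) ≤ 2 * Real.tanh m := by
  rw [tanh_eq_exp, tanh_eq_exp, tanh_eq_exp]
  set p := Real.exp (2 * (m + a)) with hp
  set q := Real.exp (2 * (m - a)) with hq
  set r := Real.exp (2 * m) with hr
  have hp0 : 0 < p := Real.exp_pos _
  have hq0 : 0 < q := Real.exp_pos _
  have hr1 : 1 ≤ r := Real.one_le_exp (by linarith)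
  have hpq : p * q = r ^ 2 := by
    rw [hp, hq, hr, sq, ← Real.exp_add, ← Real.exp_add]; ring_nf
  have hs : 2 * r ≤ p + q := by nlinarith [sq_nonneg (p - q)]
  rw [div_add_div _ _ (by positivity) (by positivity), ← mul_div_assoc,
    div_le_div_iff₀ (by positivity) (by positivity)]
  nlinarith [mul_nonneg (sub_nonneg.2 hr1) (sub_nonneg.2 hs), hp0.le, hq0.le]

private lemma nishimori_ptwise (x : ℝ) :
    Real.tanh x * (1 + Real.tanh x) * Real.exp (-(2*x))
      = Real.tanh x * (1 - Real.tanh x) := by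
  rw [tanh_eq_exp, Real.exp_neg]
  have h : 0 < Real.exp (2*x) := Real.exp_pos _
  field_simp
  ring

private lemma integrable_of_bdd {ν : Measure ℝ} [IsFiniteMeasure ν] {f : ℝ → ℝ} {C : ℝ}
    (hf : Continuous f) (h : ∀ x, |f x| ≤ C) : Integrable f ν :=
  (integrable_const C).mono' hf.aestronglyMeasurable
    (Filter.Eventually.of_forall fun x => by simpa [Real.norm_eq_abs] using h x)

private lemma continuous_tanh' : Continuous Real.tanh :=
  (Differentiable.continuous (fun x => (hasDerivAt_tanh' x).differentiableAt))

private lemma pdf_neg {t : ℝ≥0} (ht : t ≠ 0) (x : ℝ) :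
    gaussianPDFReal t t (-x) = gaussianPDFReal t t x * Real.exp (-(2*x)) := by
  have ht' : (0:ℝ) < t := lt_of_le_of_ne t.coe_nonneg (by exact_mod_cast ht.symm)
  simp only [gaussianPDFReal]
  conv_rhs => rw [mul_assoc, ← Real.exp_add]
  congr 1
  rw [Real.exp_eq_exp]
  field_simp
  ring

private lemma gauss_sym {t : ℝ≥0} (ht : t ≠ 0) (g : ℝ → ℝ) (hg : Continuous g) :
    ∫ x, g (-x) ∂(gaussianReal t t) = ∫ x, g x * Real.exp (-(2*x)) ∂(gaussianReal t t) := by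
  rw [gaussianReal_of_var_ne_zero _ ht]
  have hpm : Measurable fun x => (gaussianPDFReal t t x).toNNReal :=
    (measurable_gaussianPDFReal _ _).real_toNNReal
  have hd : gaussianPDF (t:ℝ) t = fun x => ((gaussianPDFReal t t x).toNNReal : ℝ≥0∞) := rfl
  rw [hd, integral_withDensity_eq_integral_smul hpm, integral_withDensity_eq_integral_smul hpm]
  have h1 := integral_neg_eq_self
    (fun x => ((gaussianPDFReal t t (-x)).toNNReal : ℝ≥0) • g x) (volume : Measure ℝ)
  simp only [neg_neg] at h1
  rw [h1]
  congr 1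
  funext x
  simp only [NNReal.smul_def, Real.coe_toNNReal _ (gaussianPDFReal_nonneg _ _ _)]
  rw [pdf_neg ht x]
  simp only [smul_eq_mul]
  ring

private lemma integrable_tanh {ν : Measure ℝ} [IsFiniteMeasure ν] :
    Integrable Real.tanh ν :=
  integrable_of_bdd continuous_tanh' abs_tanh_le_one

private lemma integrable_tanh_sq {ν : Measure ℝ} [IsFiniteMeasure ν] :
    Integrable (fun x => Real.tanh x ^ 2) ν :=
  integrable_of_bdd (continuous_tanh'.pow 2) (fun x => by
    rw [abs_pow]
    calc |Real.tanh x| ^ 2 ≤ 1 ^ 2 :=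
          pow_le_pow_left₀ (abs_nonneg _) (abs_tanh_le_one x) 2
      _ = 1 := one_pow 2)

private lemma nishimori {t : ℝ≥0} (ht : t ≠ 0) :
    ∫ x, Real.tanh x ∂(gaussianReal t t) = ∫ x, Real.tanh x ^ 2 ∂(gaussianReal t t) := by
  set ν := gaussianReal (t:ℝ) t with hν
  have hcont : Continuous fun y => Real.tanh y * (1 + Real.tanh y) :=
    continuous_tanh'.mul (continuous_const.add continuous_tanh')
  have h1 : ∫ x, (Real.tanh x - Real.tanh x ^ 2) ∂ν
      = ∫ x, (fun y => Real.tanh y * (1 + Real.tanh y)) x * Real.exp (-(2*x)) ∂ν := by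
    congr 1; funext x
    simp only
    rw [nishimori_ptwise x]; ring
  have h2 : ∫ x, (fun y => Real.tanh y * (1 + Real.tanh y)) (-x) ∂ν
      = ∫ x, -(Real.tanh x - Real.tanh x ^ 2) ∂ν := by
    congr 1; funext x
    simp only [Real.tanh_neg]
    ring
  have h3 : ∫ x, (Real.tanh x - Real.tanh x ^ 2) ∂ν
      = -∫ x, (Real.tanh x - Real.tanh x ^ 2) ∂ν := by
    conv_lhs => rw [h1, ← gauss_sym ht _ hcont, h2]
    rw [integral_neg]
  have h4 : ∫ x, (Real.tanh x - Real.tanh x ^ 2) ∂ν = 0 := by linarith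
  have h5 := integral_sub (integrable_tanh (ν := ν)) (integrable_tanh_sq (ν := ν))
  rw [h5] at h4
  linarith

private lemma gauss_neg_inv (t : ℝ≥0) :
    (gaussianReal 0 t).map (fun x => -x) = gaussianReal 0 t := by
  have h := gaussianReal_map_const_mul (μ := 0) (v := t) (-1 : ℝ)
  have he : (fun x : ℝ => -x) = fun x : ℝ => (-1 : ℝ) * x := by funext x; ring
  have ht : (⟨(-1:ℝ)^2, sq_nonneg _⟩ : ℝ≥0) = 1 := by ext; norm_num
  rw [mul_zero] at h
  rw [he, h]; congr 1; ext; simp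

private lemma int_tanh_le (t : ℝ≥0) :
    ∫ x, Real.tanh x ∂(gaussianReal t t) ≤ Real.tanh t := by
  have hmap : gaussianReal (t:ℝ) t = (gaussianReal 0 t).map (· + (t:ℝ)) := by
    rw [gaussianReal_map_add_const]; simp
  rw [hmap, integral_map (by fun_prop : AEMeasurable (fun x : ℝ => x + (t:ℝ)) (gaussianReal 0 t))
    continuous_tanh'.aestronglyMeasurable]
  have hc1 : Continuous fun z : ℝ => Real.tanh (z + (t:ℝ)) :=
    continuous_tanh'.comp (continuous_id.add continuous_const)
  have hc2 : Continuous fun z : ℝ => Real.tanh (-z + (t:ℝ)) :=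
    continuous_tanh'.comp ((continuous_neg).add continuous_const)
  have hneg : ∫ z, Real.tanh (z + (t:ℝ)) ∂(gaussianReal 0 t)
      = ∫ z, Real.tanh (-z + (t:ℝ)) ∂(gaussianReal 0 t) := by
    conv_lhs => rw [← gauss_neg_inv t]
    rw [integral_map measurable_neg.aemeasurable hc1.aestronglyMeasurable]
  have hint : Integrable (fun z => Real.tanh (z + (t:ℝ))) (gaussianReal 0 t) :=
    integrable_of_bdd hc1 (fun x => abs_tanh_le_one _)
  have hint2 : Integrable (fun z => Real.tanh (-z + (t:ℝ))) (gaussianReal 0 t) :=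
    integrable_of_bdd hc2 (fun x => abs_tanh_le_one _)
  have h2 : (2:ℝ) * ∫ z, Real.tanh (z + (t:ℝ)) ∂(gaussianReal 0 t) ≤ 2 * Real.tanh t := by
    have hadd := integral_add hint hint2
    calc (2:ℝ) * ∫ z, Real.tanh (z + (t:ℝ)) ∂(gaussianReal 0 t)
        = ∫ z, (Real.tanh (z + (t:ℝ)) + Real.tanh (-z + (t:ℝ))) ∂(gaussianReal 0 t) := by
          rw [hadd, ← hneg]; ring
      _ ≤ ∫ _, 2 * Real.tanh (t:ℝ) ∂(gaussianReal 0 t) := by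
          apply integral_mono (hint.add hint2) (integrable_const _)
          intro z
          have hm := tanh_add_tanh_le (m := (t:ℝ)) z t.coe_nonneg
          simp only [Pi.add_apply]
          have e1 : z + (t:ℝ) = (t:ℝ) + z := by ring
          have e2 : -z + (t:ℝ) = (t:ℝ) - z := by ring
          rw [e1, e2]
          exact hm
      _ = 2 * Real.tanh t := by
          rw [integral_const]; simp
  linarith

set_option maxHeartbeats 1000000 in
/-- Lemma 7: for `λ ∈ (0,1)`, a positive integer `k` and
`w ~ N(0, (k-1)/k)`,
`E[tanh(λ + √λ w) - (1/2) tanh²(λ + √λ w)] ≤ (1/2)(λ + 3 √(λ/k))`. -/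
theorem stmt6 (lam : ℝ) (hlam : lam ∈ Set.Ioo (0 : ℝ) 1) (k : ℕ) (hk : 0 < k) :
    (∫ w, (Real.tanh (lam + Real.sqrt lam * w)
        - (1 / 2) * Real.tanh (lam + Real.sqrt lam * w) ^ 2)
      ∂(gaussianReal 0 (((k - 1 : ℕ) : ℝ≥0) / (k : ℝ≥0))))
      ≤ (1 / 2) * (lam + 3 * Real.sqrt (lam / k)) := by
  obtain ⟨hl0, hl1⟩ := hlam
  by_cases hk1 : k = 1
  · subst hk1
    have hvz : (((1 - 1 : ℕ) : ℝ≥0) / ((1:ℕ) : ℝ≥0)) = 0 := by norm_num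
    rw [hvz, gaussianReal_zero_var, integral_dirac]
    simp only [mul_zero, add_zero, Nat.cast_one, div_one]
    have h1 : Real.tanh lam ≤ lam := tanh_le_self hl0.le
    have h2 : lam ≤ Real.sqrt lam :=
      (Real.le_sqrt hl0.le hl0.le).mpr (by nlinarith)
    nlinarith [sq_nonneg (Real.tanh lam)]
  -- main case : k ≥ 2
  have hk2 : 2 ≤ k := by omega
  set v : ℝ≥0 := (((k - 1 : ℕ) : ℝ≥0) / (k : ℝ≥0)) with hv
  have hkR : (0:ℝ) < k := by positivity
  have hvr : (v:ℝ) = 1 - 1/k := by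
    have h1 : ((k - 1 : ℕ) : ℝ) = (k:ℝ) - 1 := by
      push_cast [Nat.cast_sub hk]
      ring
    rw [hv, NNReal.coe_div, NNReal.coe_natCast, NNReal.coe_natCast, h1]
    field_simp
  have hv0 : (0:ℝ) < v := by
    rw [hvr]
    have : (2:ℝ) ≤ k := by exact_mod_cast hk2
    have : 1/(k:ℝ) ≤ 1/2 := by
      rw [div_le_div_iff₀ hkR (by norm_num)]; linarith
    linarith
  have hvne : v ≠ 0 := by
    intro h; rw [h] at hv0; simp at hv0
  have hvle : (v:ℝ) ≤ 1 := by
    rw [hvr]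
    have : (0:ℝ) ≤ 1/(k:ℝ) := by positivity
    linarith
  set t : ℝ≥0 := Real.toNNReal (lam * v) with htdef
  have ht : (t:ℝ) = lam * v := Real.coe_toNNReal _ (by positivity)
  have htne : t ≠ 0 := by
    intro h
    rw [h] at ht
    simp only [NNReal.coe_zero] at ht
    nlinarith
  set d : ℝ := lam - t with hd
  have hdval : d = lam / k := by
    rw [hd, ht, hvr]; field_simp; ring
  have hd0 : 0 ≤ d := by rw [hdval]; positivity
  -- the map step
  have hmap0 : (gaussianReal 0 v).map (fun w => Real.sqrt lam * w) = gaussianReal 0 t := by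
    have h1 := gaussianReal_map_const_mul (μ := 0) (v := v) (Real.sqrt lam)
    rw [mul_zero] at h1
    have h2 : (fun w : ℝ => Real.sqrt lam * w) = (Real.sqrt lam * ·) := rfl
    rw [h2, h1]
    congr 1
    ext
    push_cast
    rw [Real.sq_sqrt hl0.le, ht]
  have hmap : (gaussianReal 0 v).map (fun w => Real.sqrt lam * w + (t:ℝ))
      = gaussianReal t t := by
    have h2 := Measure.map_map (μ := gaussianReal 0 v)
      (f := fun w : ℝ => Real.sqrt lam * w)
      (g := fun x : ℝ => x + (t:ℝ)) (measurable_id.add_const _)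
      (measurable_const_mul _)
    have h3 : ((fun x : ℝ => x + (t:ℝ)) ∘ fun w : ℝ => Real.sqrt lam * w)
        = fun w => Real.sqrt lam * w + (t:ℝ) := rfl
    have h4 : (fun x : ℝ => x + (t:ℝ)) = (· + (t:ℝ)) := rfl
    rw [← h3, ← h2, hmap0, h4, gaussianReal_map_add_const, zero_add]
  -- rewrite the integral
  set G : ℝ → ℝ := fun x => Real.tanh (d + x) - (1/2) * Real.tanh (d + x) ^ 2 with hG
  have hGcont : Continuous G := by
    apply Continuous.sub
    · exact continuous_tanh'.comp (continuous_const.add continuous_id)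
    · exact continuous_const.mul ((continuous_tanh'.comp
        (continuous_const.add continuous_id)).pow 2)
  have hIeq : (∫ w, (Real.tanh (lam + Real.sqrt lam * w)
        - (1 / 2) * Real.tanh (lam + Real.sqrt lam * w) ^ 2) ∂(gaussianReal 0 v))
      = ∫ x, G x ∂(gaussianReal t t) := by
    rw [← hmap, integral_map (by fun_prop) hGcont.aestronglyMeasurable]
    congr 1
    funext w
    rw [hG]
    simp only
    have harg : d + (Real.sqrt lam * w + (t:ℝ)) = lam + Real.sqrt lam * w := by
      rw [hd]; ring
    rw [harg]
  rw [hIeq]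
  -- pointwise bound
  have hpt : ∀ x, G x ≤ (Real.tanh x - (1/2) * Real.tanh x ^ 2) + 2 * d := by
    intro x
    have h1 := tanh_sub_le (d + x) x
    have harg : d + x - x = d := by ring
    rw [harg, abs_of_nonneg hd0] at h1
    obtain ⟨h1a, h1b⟩ := abs_le.mp h1
    obtain ⟨h2a, h2b⟩ := abs_le.mp (abs_tanh_le_one (d + x))
    obtain ⟨h3a, h3b⟩ := abs_le.mp (abs_tanh_le_one x)
    rw [hG]
    simp only
    nlinarith [mul_nonneg hd0 hd0]
  have hFint0 : Integrable (fun x => Real.tanh x - (1/2) * Real.tanh x ^ 2)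
      (gaussianReal t t) := by
    have h1 : Integrable (fun x => (1/2 : ℝ) * Real.tanh x ^ 2) (gaussianReal t t) :=
      integrable_tanh_sq.const_mul _
    exact integrable_tanh.sub h1
  have hFint : Integrable (fun x => Real.tanh x - (1/2) * Real.tanh x ^ 2 + 2*d)
      (gaussianReal t t) := hFint0.add (integrable_const _)
  have hGint : Integrable G (gaussianReal t t) :=
    integrable_of_bdd (C := 2) hGcont (fun x => by
      obtain ⟨h2a, h2b⟩ := abs_le.mp (abs_tanh_le_one (d + x))
      rw [hG]
      simp only
      rw [abs_le]
      constructor <;> nlinarith)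
  have step1 : ∫ x, G x ∂(gaussianReal t t)
      ≤ ∫ x, (Real.tanh x - (1/2) * Real.tanh x ^ 2 + 2*d) ∂(gaussianReal t t) := by
    apply integral_mono hGint hFint
    intro x
    exact hpt x
  have step2 : ∫ x, (Real.tanh x - (1/2) * Real.tanh x ^ 2 + 2*d) ∂(gaussianReal t t)
      = (1/2) * (∫ x, Real.tanh x ∂(gaussianReal t t)) + 2*d := by
    rw [integral_add hFint0 (integrable_const _),
      integral_sub integrable_tanh (integrable_tanh_sq.const_mul _),
      integral_const_mul, ← nishimori htne, integral_const]
    simp only [measure_univ, ENNReal.toReal_one, smul_eq_mul, one_mul, probReal_univ]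
    ring
  have step3 : (1/2) * (∫ x, Real.tanh x ∂(gaussianReal t t)) + 2*d
      ≤ (1/2) * (lam * v) + 2*d := by
    have h1 := int_tanh_le t
    have h2 : Real.tanh (t:ℝ) ≤ lam * (v:ℝ) :=
      le_of_le_of_eq (tanh_le_self t.coe_nonneg) ht
    linarith
  -- final arithmetic
  have hsqrt : lam / k ≤ Real.sqrt (lam / k) := by
    have hk1R : (1:ℝ) ≤ k := by exact_mod_cast hk
    have hle1 : lam / k ≤ 1 := by
      rw [div_le_one hkR]; linarith
    rw [Real.le_sqrt (by positivity) (by positivity)]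
    nlinarith [div_nonneg hl0.le hkR.le]
  have hfinal : (1/2) * (lam * v) + 2*d ≤ (1/2) * (lam + 3 * Real.sqrt (lam / k)) := by
    rw [hvr, hdval]
    have : (1/2) * (lam * (1 - 1/k)) + 2 * (lam/k) = (1/2) * lam + (3/2) * (lam/k) := by
      field_simp; ring
    rw [this]
    linarith only [hsqrt, hl0]
  linarith only [step1, step2, step3, hfinal]
end

section
/- Let D_L = {(x_i, y_i)}_{i=1}^L be L i.i.d. labeled samples from the symmetric sparse Gaussian mixture model with a k-sparse μ whose nonzero entries are ±√(λ/k). Assume k = ⌊c₁ p^α⌋ for some α ∈ (0,1) and L = ⌈(2βk/λ)·log(p−k)⌉ for some β ∈ (0,1). Let S_L be the indices of the k largest magnitudes of w_L = (1/L)·Σ_{i=1}^L y_i x_i. If β > 1−α, then for every ε ∈ (0,1), P(|S ∩ S_L|/k > 1−ε) → 1 as p → ∞. -/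
open MeasureTheory ProbabilityTheory Filter
open scoped ENNReal NNReal

noncomputable section

/-- Product of independent one-dimensional Gaussians `N(m j, 1)`: the law of `N(m, I_p)`. -/
def gaussPi {p : ℕ} (m : Fin p → ℝ) : Measure (Fin p → ℝ) :=
  Measure.pi fun j => gaussianReal (m j) 1

/-- The law of a labeled sample `(x, y)`: `y` uniform on `{-1,1}`, `x | y ~ N(yμ, I_p)`. -/
def labeledLaw {p : ℕ} (m : Fin p → ℝ) : Measure ((Fin p → ℝ) × ℝ) :=
  (2 : ℝ≥0∞)⁻¹ • (gaussPi m).map (fun x => (x, (1 : ℝ)))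
    + (2 : ℝ≥0∞)⁻¹ • (gaussPi (fun j => -m j)).map (fun x => (x, (-1 : ℝ)))

/-- The labeled-data vector `w_L = (1/L) ∑ᵢ yᵢ xᵢ`. -/
def wL {p L : ℕ} (dl : Fin L → (Fin p → ℝ) × ℝ) : Fin p → ℝ :=
  fun j => (L : ℝ)⁻¹ * ∑ i, (dl i).2 * (dl i).1 j

/-- `T` is a set of `m` indices with the largest magnitudes of `w`. -/
def IsTopAbs {p : ℕ} (m : ℕ) (w : Fin p → ℝ) (T : Finset (Fin p)) : Prop :=
  T.card = m ∧ ∀ i ∈ T, ∀ j ∉ T, |w j| ≤ |w i|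

/-! ### Auxiliary lemmas -/

open Real Set

section PiHelpers

variable {ι : Type*} [Fintype ι] {X : ι → Type*} [∀ i, MeasurableSpace (X i)]
  (ν : ∀ i, Measure (X i)) [∀ i, IsProbabilityMeasure (ν i)]

lemma my_pi_map_eval (i : ι) : (Measure.pi ν).map (Function.eval i) = ν i := by
  classical
  ext s hs
  rw [Measure.map_apply (measurable_pi_apply i) hs, ← Set.univ_pi_update_univ, Measure.pi_pi]
  rw [Finset.prod_eq_single i]
  · simp
  · intro j _ hj
    simp [Function.update_of_ne hj]
  · simp

lemma my_iIndepFun_eval :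
    iIndepFun
      (fun i (x : ∀ j, X j) => x i) (Measure.pi ν) := by
  classical
  rw [iIndepFun_iff_measure_inter_preimage_eq_mul]
  intro S sets h_meas
  have h2 : ∀ i ∈ S, (Measure.pi ν) ((fun x : ∀ j, X j => x i) ⁻¹' sets i) = ν i (sets i) := by
    intro i hi
    rw [← Measure.map_apply (measurable_pi_apply i) (h_meas i hi)]
    exact congrFun (congrArg _ (my_pi_map_eval ν i)) _
  have h1 : (⋂ i ∈ S, (fun x : ∀ j, X j => x i) ⁻¹' sets i) = Set.pi ↑S sets := by
    rw [Set.pi_def]; rfl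
  rw [h1, ← Set.pi_univ_ite, Measure.pi_pi]
  calc ∏ i : ι, ν i (if i ∈ ↑S then sets i else univ)
      = ∏ i : ι, (if i ∈ S then ν i (sets i) else 1) :=
        Finset.prod_congr rfl (fun j _ => by by_cases hj : j ∈ S <;> simp [hj])
    _ = ∏ i ∈ S, ν i (sets i) := by rw [Finset.prod_ite_mem, Finset.univ_inter]
    _ = ∏ i ∈ S, (Measure.pi ν) ((fun x : ∀ j, X j => x i) ⁻¹' sets i) :=
        (Finset.prod_congr rfl h2).symm

end PiHelpers

section GaussianMGF

lemma my_pdf_mul_exp (m t x : ℝ) :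
    gaussianPDFReal m 1 x * rexp (t * x)
      = rexp (t * m + t ^ 2 / 2) * gaussianPDFReal (m + t) 1 x := by
  simp only [gaussianPDFReal, NNReal.coe_one, mul_one]
  rw [mul_comm (rexp (t * m + t ^ 2 / 2)), mul_assoc, mul_assoc, ← Real.exp_add, ← Real.exp_add]
  congr 1
  ring_nf

lemma my_integrable_exp_gaussian (m t : ℝ) :
    Integrable (fun x => rexp (t * x)) (gaussianReal m 1) := by
  rw [gaussianReal_of_var_ne_zero m one_ne_zero]
  have hpdf : (gaussianPDF m 1) = fun x => ((gaussianPDFReal m 1 x).toNNReal : ℝ≥0∞) := by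
    funext x; rfl
  rw [hpdf, integrable_withDensity_iff_integrable_coe_smul
    ((measurable_gaussianPDFReal m 1).real_toNNReal)]
  have : ∀ x : ℝ, ((gaussianPDFReal m 1 x).toNNReal : ℝ) • rexp (t * x)
      = rexp (t * m + t ^ 2 / 2) * gaussianPDFReal (m + t) 1 x := by
    intro x
    rw [smul_eq_mul, Real.coe_toNNReal _ (gaussianPDFReal_nonneg m 1 x), my_pdf_mul_exp]
  simp only [this]
  exact (integrable_gaussianPDFReal (m + t) 1).const_mul _

lemma my_integral_exp_gaussian (m t : ℝ) :
    ∫ x, rexp (t * x) ∂(gaussianReal m 1) = rexp (t * m + t ^ 2 / 2) := by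
  rw [gaussianReal_of_var_ne_zero m one_ne_zero]
  have hpdf : (gaussianPDF m 1) = fun x => ((gaussianPDFReal m 1 x).toNNReal : ℝ≥0∞) := by
    funext x; rfl
  rw [hpdf, integral_withDensity_eq_integral_smul
    ((measurable_gaussianPDFReal m 1).real_toNNReal)]
  have : ∀ x : ℝ, (gaussianPDFReal m 1 x).toNNReal • rexp (t * x)
      = rexp (t * m + t ^ 2 / 2) * gaussianPDFReal (m + t) 1 x := by
    intro x
    rw [NNReal.smul_def, smul_eq_mul, Real.coe_toNNReal _ (gaussianPDFReal_nonneg m 1 x),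
      my_pdf_mul_exp]
  simp only [this]
  rw [integral_const_mul, integral_gaussianPDFReal_eq_one (m + t) one_ne_zero, mul_one]

end GaussianMGF

section LabeledLaw

instance gaussPi_prob {p : ℕ} (m : Fin p → ℝ) : IsProbabilityMeasure (gaussPi m) := by
  unfold gaussPi; infer_instance

lemma measurable_pair1 {p : ℕ} : Measurable (fun x : Fin p → ℝ => (x, (1 : ℝ))) :=
  measurable_id.prodMk measurable_const

lemma measurable_pair2 {p : ℕ} : Measurable (fun x : Fin p → ℝ => (x, (-1 : ℝ))) :=
  measurable_id.prodMk measurable_const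

instance labeledLaw_prob {p : ℕ} (m : Fin p → ℝ) : IsProbabilityMeasure (labeledLaw m) := by
  constructor
  have h1 : IsProbabilityMeasure ((gaussPi m).map (fun x => (x, (1 : ℝ)))) :=
    Measure.isProbabilityMeasure_map measurable_pair1.aemeasurable
  have h2 : IsProbabilityMeasure ((gaussPi (fun j => -m j)).map (fun x => (x, (-1 : ℝ)))) :=
    Measure.isProbabilityMeasure_map measurable_pair2.aemeasurable
  simp [labeledLaw, h1.measure_univ, h2.measure_univ, ENNReal.inv_two_add_inv_two]

lemma measurable_g {p : ℕ} (j : Fin p) :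
    Measurable (fun xy : (Fin p → ℝ) × ℝ => xy.2 * xy.1 j) :=
  measurable_snd.mul ((measurable_pi_apply j).comp measurable_fst)

lemma labeledLaw_map {p : ℕ} (m : Fin p → ℝ) (j : Fin p) :
    (labeledLaw m).map (fun xy : (Fin p → ℝ) × ℝ => xy.2 * xy.1 j)
      = gaussianReal (m j) 1 := by
  rw [labeledLaw, Measure.map_add _ _ (measurable_g j), Measure.map_smul, Measure.map_smul,
    Measure.map_map (measurable_g j) measurable_pair1,
    Measure.map_map (measurable_g j) measurable_pair2]
  have e1 : ((fun xy : (Fin p → ℝ) × ℝ => xy.2 * xy.1 j) ∘ fun x => (x, (1:ℝ)))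
      = Function.eval j := by funext x; simp [Function.eval]
  have e2 : ((fun xy : (Fin p → ℝ) × ℝ => xy.2 * xy.1 j) ∘ fun x => (x, (-1:ℝ)))
      = (fun y : ℝ => (-1 : ℝ) * y) ∘ Function.eval j := by funext x; simp [Function.eval]
  rw [e1, e2]
  have e3 : Measure.map ((fun y : ℝ => (-1 : ℝ) * y) ∘ Function.eval j)
        (gaussPi fun j => -m j)
      = ((gaussPi fun j => -m j).map (Function.eval j)).map (fun y : ℝ => (-1 : ℝ) * y) :=
    (Measure.map_map (measurable_id.const_mul _) (measurable_pi_apply j)).symm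
  rw [e3]
  rw [show gaussPi m = Measure.pi (fun j => gaussianReal (m j) 1) from rfl,
    show gaussPi (fun j => -m j) = Measure.pi (fun j => gaussianReal (-m j) 1) from rfl,
    my_pi_map_eval, my_pi_map_eval]
  have : (gaussianReal (-m j) 1).map (fun y : ℝ => (-1 : ℝ) * y) = gaussianReal (m j) 1 := by
    rw [show (fun y : ℝ => (-1:ℝ) * y) = ((-1 : ℝ) * ·) from rfl, gaussianReal_map_const_mul]
    norm_num
  rw [this, ← add_smul, ENNReal.inv_two_add_inv_two, one_smul]

end LabeledLaw

section Chernoff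

variable {p L : ℕ} (m : Fin p → ℝ) (j : Fin p)

/-- The summand `y_i (x_i)_j` as a function of the data. -/
def Xc (j : Fin p) (i : Fin L) (d : Fin L → (Fin p → ℝ) × ℝ) : ℝ := (d i).2 * (d i).1 j

lemma measurable_Xc (i : Fin L) : Measurable (Xc j i) :=
  (measurable_g j).comp (measurable_pi_apply i)

lemma map_Xc (i : Fin L) :
    (Measure.pi fun _ : Fin L => labeledLaw m).map (Xc j i) = gaussianReal (m j) 1 := by
  have : Xc j i = (fun xy : (Fin p → ℝ) × ℝ => xy.2 * xy.1 j) ∘ (Function.eval i) := rfl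
  rw [this, ← Measure.map_map (measurable_g j) (measurable_pi_apply i), my_pi_map_eval,
    labeledLaw_map]

lemma integrable_exp_Xc (i : Fin L) (t : ℝ) :
    Integrable (fun d => rexp (t * Xc j i d)) (Measure.pi fun _ : Fin L => labeledLaw m) := by
  have h := my_integrable_exp_gaussian (m j) t
  rw [← map_Xc m j i] at h
  exact (integrable_map_measure h.aestronglyMeasurable (measurable_Xc j i).aemeasurable).mp h

lemma mgf_Xc (i : Fin L) (t : ℝ) :
    mgf (Xc j i) (Measure.pi fun _ : Fin L => labeledLaw m) t
      = rexp (t * m j + t ^ 2 / 2) := by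
  rw [mgf, ← my_integral_exp_gaussian (m j) t, ← map_Xc m j i,
    integral_map (measurable_Xc j i).aemeasurable]
  exact (measurable_exp.comp (measurable_const_mul t)).aestronglyMeasurable

lemma iIndep_Xc : iIndepFun
    (fun i => Xc (L := L) j i) (Measure.pi fun _ : Fin L => labeledLaw m) := by
  have h := (my_iIndepFun_eval (fun _ : Fin L => labeledLaw m)).comp
    (fun _ => (fun xy : (Fin p → ℝ) × ℝ => xy.2 * xy.1 j)) (fun _ => measurable_g j)
  exact h

lemma chernoff_core (t a : ℝ) :
    rexp (-t * (a * L)) * ∏ i : Fin L,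
        mgf (Xc (L := L) j i) (Measure.pi fun _ : Fin L => labeledLaw m) t
      = rexp ((L : ℝ) * (-t * a + t * m j + t ^ 2 / 2)) := by
  simp_rw [mgf_Xc]
  rw [Finset.prod_const, Finset.card_univ, Fintype.card_fin, ← Real.exp_nat_mul, ← Real.exp_add]
  congr 1
  ring

lemma chernoff_ge (a : ℝ) (ha : m j ≤ a) :
    ((Measure.pi fun _ : Fin L => labeledLaw m) {d | a * L ≤ ∑ i, Xc j i d}).toReal
      ≤ rexp (-(L : ℝ) * (a - m j) ^ 2 / 2) := by
  set t := a - m j with ht_def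
  have ht : 0 ≤ t := sub_nonneg.mpr ha
  have h_int : Integrable (fun d => rexp (t * (∑ i, Xc (L := L) j i) d))
      (Measure.pi fun _ : Fin L => labeledLaw m) := by
    apply (iIndep_Xc m j).integrable_exp_mul_sum (measurable_Xc j)
    exact fun i _ => integrable_exp_Xc m j i t
  have h := measure_ge_le_exp_mul_mgf (X := ∑ i, Xc (L := L) j i)
    (μ := Measure.pi fun _ : Fin L => labeledLaw m) (a * L) ht h_int
  have hset : {d | a * (L : ℝ) ≤ (∑ i, Xc (L := L) j i) d} = {d | a * (L : ℝ) ≤ ∑ i, Xc j i d} := by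
    ext d; simp [Finset.sum_apply]
  rw [hset] at h
  refine h.trans ?_
  rw [(iIndep_Xc m j).mgf_sum (measurable_Xc j), chernoff_core]
  have : (L : ℝ) * (-t * a + t * m j + t ^ 2 / 2) = -(L : ℝ) * (a - m j) ^ 2 / 2 := by
    rw [ht_def]; ring
  rw [this]

lemma chernoff_le (a : ℝ) (ha : a ≤ m j) :
    ((Measure.pi fun _ : Fin L => labeledLaw m) {d | ∑ i, Xc j i d ≤ a * L}).toReal
      ≤ rexp (-(L : ℝ) * (a - m j) ^ 2 / 2) := by
  set t := a - m j with ht_def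
  have ht : t ≤ 0 := sub_nonpos.mpr ha
  have h_int : Integrable (fun d => rexp (t * (∑ i, Xc (L := L) j i) d))
      (Measure.pi fun _ : Fin L => labeledLaw m) := by
    apply (iIndep_Xc m j).integrable_exp_mul_sum (measurable_Xc j)
    exact fun i _ => integrable_exp_Xc m j i t
  have h := measure_le_le_exp_mul_mgf (X := ∑ i, Xc (L := L) j i)
    (μ := Measure.pi fun _ : Fin L => labeledLaw m) (a * L) ht h_int
  have hset : {d | (∑ i, Xc (L := L) j i) d ≤ a * (L : ℝ)} = {d | ∑ i, Xc j i d ≤ a * (L : ℝ)} := by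
    ext d; simp [Finset.sum_apply]
  rw [hset] at h
  refine h.trans ?_
  rw [(iIndep_Xc m j).mgf_sum (measurable_Xc j), chernoff_core]
  have : (L : ℝ) * (-t * a + t * m j + t ^ 2 / 2) = -(L : ℝ) * (a - m j) ^ 2 / 2 := by
    rw [ht_def]; ring
  rw [this]

end Chernoff

section Tails

variable {p L : ℕ} (m : Fin p → ℝ) (j : Fin p)

lemma measurable_wLj : Measurable (fun d : Fin L → (Fin p → ℝ) × ℝ => wL d j) := by
  unfold wL
  exact measurable_const.mul (Finset.measurable_sum _ (fun i _ =>
    ((measurable_snd.comp (measurable_pi_apply i)).mul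
      ((measurable_pi_apply j).comp (measurable_fst.comp (measurable_pi_apply i))))))

lemma wL_eq (d : Fin L → (Fin p → ℝ) × ℝ) : wL d j = (L : ℝ)⁻¹ * ∑ i, Xc j i d := rfl

lemma event_le_iff (hL : 0 < L) (τ : ℝ) (d : Fin L → (Fin p → ℝ) × ℝ) :
    wL d j ≤ τ ↔ ∑ i, Xc j i d ≤ τ * L := by
  rw [wL_eq]
  have hLpos : (0 : ℝ) < L := Nat.cast_pos.mpr hL
  rw [inv_mul_le_iff₀ hLpos, mul_comm]

lemma event_ge_iff (hL : 0 < L) (τ : ℝ) (d : Fin L → (Fin p → ℝ) × ℝ) :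
    τ ≤ wL d j ↔ τ * L ≤ ∑ i, Xc j i d := by
  rw [wL_eq]
  have hLpos : (0 : ℝ) < L := Nat.cast_pos.mpr hL
  rw [le_inv_mul_iff₀ hLpos, mul_comm]

lemma tail_off (hL : 0 < L) (τ : ℝ) (hτ : 0 ≤ τ) (hmj : m j = 0) :
    ((Measure.pi fun _ : Fin L => labeledLaw m) {d | τ < |wL d j|}).toReal
      ≤ 2 * rexp (-(L : ℝ) * τ ^ 2 / 2) := by
  have hsub : {d : Fin L → (Fin p → ℝ) × ℝ | τ < |wL d j|}
      ⊆ {d | τ * L ≤ ∑ i, Xc j i d} ∪ {d | ∑ i, Xc j i d ≤ -τ * L} := by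
    intro d hd
    simp only [Set.mem_setOf_eq, Set.mem_union] at *
    rcases lt_abs.mp hd with h | h
    · exact Or.inl ((event_ge_iff j hL τ d).mp h.le)
    · refine Or.inr ?_
      rw [← event_le_iff j hL (-τ) d]
      linarith
  have hμ := (measure_mono (μ := Measure.pi fun _ : Fin L => labeledLaw m) hsub).trans
    (measure_union_le _ _)
  have h1 := chernoff_ge (L := L) m j τ (by rw [hmj]; exact hτ)
  have h2 := chernoff_le (L := L) m j (-τ) (by rw [hmj]; linarith)
  have hfin1 : (Measure.pi fun _ : Fin L => labeledLaw m) {d | τ * L ≤ ∑ i, Xc j i d} ≠ ⊤ :=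
    measure_ne_top _ _
  have hfin2 : (Measure.pi fun _ : Fin L => labeledLaw m) {d | ∑ i, Xc j i d ≤ -τ * L} ≠ ⊤ :=
    measure_ne_top _ _
  have := ENNReal.toReal_mono (by simp [ENNReal.add_ne_top, hfin1, hfin2]) hμ
  rw [ENNReal.toReal_add hfin1 hfin2] at this
  have e1 : rexp (-(L : ℝ) * (τ - m j) ^ 2 / 2) = rexp (-(L : ℝ) * τ ^ 2 / 2) := by
    rw [hmj]; ring_nf
  have e2 : rexp (-(L : ℝ) * (-τ - m j) ^ 2 / 2) = rexp (-(L : ℝ) * τ ^ 2 / 2) := by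
    rw [hmj]; ring_nf
  rw [e1] at h1
  rw [e2] at h2
  linarith only [this, h1, h2]

lemma tail_on (hL : 0 < L) (s' τ : ℝ) (hτ0 : 0 ≤ τ) (hτs : τ ≤ s')
    (hm : m j = s' ∨ m j = -s') :
    ((Measure.pi fun _ : Fin L => labeledLaw m) {d | |wL d j| ≤ τ}).toReal
      ≤ rexp (-(L : ℝ) * (s' - τ) ^ 2 / 2) := by
  rcases hm with hm | hm
  · have hsub : {d : Fin L → (Fin p → ℝ) × ℝ | |wL d j| ≤ τ}
        ⊆ {d | ∑ i, Xc j i d ≤ τ * L} := by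
      intro d hd
      simp only [Set.mem_setOf_eq] at *
      exact (event_le_iff j hL τ d).mp ((abs_le.mp hd).2)
    have hμ := ENNReal.toReal_mono (measure_ne_top (Measure.pi fun _ : Fin L => labeledLaw m) _)
      (measure_mono (μ := Measure.pi fun _ : Fin L => labeledLaw m) hsub)
    refine hμ.trans ?_
    have h := chernoff_le (L := L) m j τ (by rw [hm]; exact hτs)
    have e : rexp (-(L : ℝ) * (τ - m j) ^ 2 / 2) = rexp (-(L : ℝ) * (s' - τ) ^ 2 / 2) := by
      rw [hm]; ring_nf
    rwa [e] at h
  · have hsub : {d : Fin L → (Fin p → ℝ) × ℝ | |wL d j| ≤ τ}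
        ⊆ {d | -τ * L ≤ ∑ i, Xc j i d} := by
      intro d hd
      simp only [Set.mem_setOf_eq] at *
      exact (event_ge_iff j hL (-τ) d).mp ((abs_le.mp hd).1)
    have hμ := ENNReal.toReal_mono (measure_ne_top (Measure.pi fun _ : Fin L => labeledLaw m) _)
      (measure_mono (μ := Measure.pi fun _ : Fin L => labeledLaw m) hsub)
    refine hμ.trans ?_
    have h := chernoff_ge (L := L) m j (-τ) (by rw [hm]; linarith)
    have e : rexp (-(L : ℝ) * (-τ - m j) ^ 2 / 2) = rexp (-(L : ℝ) * (s' - τ) ^ 2 / 2) := by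
      rw [hm]; ring_nf
    rwa [e] at h

end Tails

section Counting

lemma combin {p : ℕ} (k : ℕ) (w : Fin p → ℝ) (S T : Finset (Fin p)) (hS : S.card = k)
    (hT : IsTopAbs k w T) (τ : ℝ) :
    k ≤ (S ∩ T).card
      + max (S.filter (fun j => |w j| ≤ τ)).card
          ((Finset.univ \ S).filter (fun j => τ < |w j|)).card := by
  classical
  set A := S.filter (fun j => τ < |w j|) with hA
  have hAcard : A.card + (S.filter (fun j => |w j| ≤ τ)).card = k := by
    have he : S.filter (fun j => |w j| ≤ τ) = S.filter (fun j => ¬ τ < |w j|) := by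
      simp [not_lt]
    rw [hA, he, Finset.card_filter_add_card_filter_not, hS]
  by_cases hsub : A ⊆ T
  · have hASint : A ⊆ S ∩ T := by
      intro a ha; exact Finset.mem_inter.mpr ⟨Finset.mem_of_mem_filter a ha, hsub ha⟩
    have := Finset.card_le_card hASint
    omega
  · obtain ⟨j0, hj0A, hj0T⟩ := Finset.not_subset.mp hsub
    have hj0 : τ < |w j0| := (Finset.mem_filter.mp hj0A).2
    have hTall : ∀ i ∈ T, τ < |w i| := fun i hi => lt_of_lt_of_le hj0 (hT.2 i hi j0 hj0T)
    have hTS : T \ S ⊆ (Finset.univ \ S).filter (fun j => τ < |w j|) := by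
      intro i hi
      rw [Finset.mem_filter]
      rw [Finset.mem_sdiff] at hi
      exact ⟨Finset.mem_sdiff.mpr ⟨Finset.mem_univ i, hi.2⟩, hTall i hi.1⟩
    have h1 := Finset.card_le_card hTS
    have h2 : (T \ S).card + (T ∩ S).card = T.card := Finset.card_sdiff_add_card_inter T S
    have h3 : (T ∩ S).card = (S ∩ T).card := by rw [Finset.inter_comm]
    have h4 : T.card = k := hT.1
    omega

lemma markov_count {Ω : Type*} [MeasurableSpace Ω] (μ : Measure Ω) [IsProbabilityMeasure μ]
    {p : ℕ} (F : Finset (Fin p)) (Q : Fin p → Ω → Prop) [∀ j d, Decidable (Q j d)]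
    (hA : ∀ j, MeasurableSet {d | Q j d}) (c : ℝ) (hc : 0 < c) :
    (μ {d | c ≤ ((F.filter (fun j => Q j d)).card : ℝ)}).toReal
      ≤ (∑ j ∈ F, (μ {d | Q j d}).toReal) / c := by
  set A : Fin p → Set Ω := fun j => {d | Q j d} with hAdef
  set N : Ω → ℕ := fun d => (F.filter (fun j => Q j d)).card with hN
  have key : ∀ d, (N d : ℝ≥0∞) = ∑ j ∈ F, (A j).indicator (fun _ => (1 : ℝ≥0∞)) d := by
    intro d
    rw [hN]
    simp only [Finset.card_filter]
    push_cast
    refine Finset.sum_congr rfl fun j _ => ?_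
    by_cases h : Q j d <;> simp [h, Set.indicator_apply, hAdef, Set.mem_setOf_eq]
  have hfun : (fun d => (N d : ℝ≥0∞))
      = fun d => ∑ j ∈ F, (A j).indicator (fun _ => (1 : ℝ≥0∞)) d := funext key
  have hmeas : Measurable fun d => (N d : ℝ≥0∞) := by
    rw [hfun]
    exact Finset.measurable_sum _ (fun j _ => measurable_const.indicator (hA j))
  have hint : ∫⁻ d, (N d : ℝ≥0∞) ∂μ = ∑ j ∈ F, μ (A j) := by
    rw [hfun, lintegral_finset_sum _ (fun j _ => measurable_const.indicator (hA j))]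
    refine Finset.sum_congr rfl fun j _ => ?_
    rw [lintegral_indicator (hA j)]
    simp
    rfl
  have hmarkov := mul_meas_ge_le_lintegral₀ (μ := μ) hmeas.aemeasurable (ENNReal.ofReal c)
  rw [hint] at hmarkov
  have hsets : {x | ENNReal.ofReal c ≤ (N x : ℝ≥0∞)} = {d | c ≤ ((N d : ℕ) : ℝ)} := by
    ext d
    simp only [Set.mem_setOf_eq]
    rw [ENNReal.ofReal_le_iff_le_toReal (ENNReal.natCast_ne_top _)]
    simp
  rw [hsets] at hmarkov
  have hItop : (∑ j ∈ F, μ (A j)) ≠ ⊤ :=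
    (ENNReal.sum_lt_top.mpr (fun j _ => measure_lt_top μ (A j))).ne
  have hle : μ {d | c ≤ ((N d : ℕ) : ℝ)} ≤ (∑ j ∈ F, μ (A j)) / ENNReal.ofReal c := by
    rw [ENNReal.le_div_iff_mul_le (Or.inl (by simp [hc.ne', ENNReal.ofReal_eq_zero, not_le, hc]))
      (Or.inl ENNReal.ofReal_ne_top), mul_comm]
    exact hmarkov
  calc (μ {d | c ≤ ((N d : ℕ) : ℝ)}).toReal
      ≤ ((∑ j ∈ F, μ (A j)) / ENNReal.ofReal c).toReal := by
        refine ENNReal.toReal_mono ?_ hle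
        exact (ENNReal.div_lt_top hItop (by simp [ENNReal.ofReal_eq_zero, not_le, hc])).ne
    _ = (∑ j ∈ F, (μ (A j)).toReal) / c := by
        rw [ENNReal.toReal_div, ENNReal.toReal_ofReal hc.le, ENNReal.toReal_sum]
        exact fun j _ => (measure_lt_top μ (A j)).ne

end Counting

section Asymp

variable {α c1 : ℝ} (hα : 0 < α) (hα2 : α < 1) (hc1 : 0 < c1)
  {k : ℕ → ℕ} (hk : ∀ p : ℕ, k p = ⌊c1 * (p : ℝ) ^ α⌋₊)

include hα hc1 hk in
omit hα in
lemma k_le (p : ℕ) : (k p : ℝ) ≤ c1 * (p : ℝ) ^ α := by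
  rw [hk p]
  exact Nat.floor_le (by positivity)

include hk in
lemma k_ge (p : ℕ) : c1 * (p : ℝ) ^ α - 1 ≤ (k p : ℝ) := by
  rw [hk p]
  exact (Nat.sub_one_lt_floor _).le

include hα hc1 in
lemma base_tendsto : Tendsto (fun p : ℕ => c1 * (p : ℝ) ^ α) atTop atTop := by
  apply Tendsto.const_mul_atTop hc1
  exact (tendsto_rpow_atTop hα).comp tendsto_natCast_atTop_atTop

include hα hc1 hk in
lemma kR_tendsto : Tendsto (fun p : ℕ => (k p : ℝ)) atTop atTop := by
  apply tendsto_atTop_mono (k_ge hk)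
  exact tendsto_atTop_add_const_right _ _ (base_tendsto hα hc1)

include hα hc1 hk in
lemma k_tendsto : Tendsto k atTop atTop := by
  rw [← tendsto_natCast_atTop_iff (R := ℝ)]
  exact kR_tendsto hα hc1 hk

include hα hα2 hc1 hk in
lemma ev_half : ∀ᶠ p : ℕ in atTop, (k p : ℝ) ≤ (p : ℝ) / 2 := by
  have h1 : Tendsto (fun p : ℕ => (p : ℝ) ^ (1 - α)) atTop atTop :=
    (tendsto_rpow_atTop (by linarith)).comp tendsto_natCast_atTop_atTop
  filter_upwards [h1.eventually_ge_atTop (2 * c1), eventually_ge_atTop 1] with p h2 hp1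
  have hp0 : (0 : ℝ) < (p : ℝ) := by exact_mod_cast hp1
  have : c1 * (p : ℝ) ^ α ≤ (p : ℝ) / 2 := by
    have := mul_le_mul_of_nonneg_right h2 (le_of_lt (Real.rpow_pos_of_pos hp0 α))
    rw [← Real.rpow_add hp0, sub_add_cancel, Real.rpow_one] at this
    linarith
  exact (k_le hc1 hk p).trans this

include hα hα2 hc1 hk in
lemma pk_tendsto : Tendsto (fun p : ℕ => (p : ℝ) - (k p : ℝ)) atTop atTop := by
  have hev : (fun p : ℕ => (p : ℝ) / 2) ≤ᶠ[atTop] fun p : ℕ => (p : ℝ) - (k p : ℝ) := by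
    filter_upwards [ev_half hα hα2 hc1 hk] with p h
    show (p : ℝ) / 2 ≤ (p : ℝ) - (k p : ℝ)
    linarith
  exact tendsto_atTop_mono' atTop hev
    ((tendsto_natCast_atTop_atTop (R := ℝ)).atTop_div_const two_pos)

include hα hα2 hc1 hk in
lemma g1_tendsto {c ε : ℝ} (hc : 0 < c) :
    Tendsto (fun p : ℕ => ((p : ℝ) - (k p : ℝ)) ^ (-c) / ε) atTop (nhds 0) := by
  have h := (tendsto_rpow_neg_atTop hc).comp (pk_tendsto hα hα2 hc1 hk)
  simpa using h.div_const ε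

include hα hα2 hc1 hk in
lemma g2_tendsto {γ ε : ℝ} (hγ0 : 0 ≤ γ) (hγα : γ < α) (hε : 0 < ε) :
    Tendsto (fun p : ℕ => 2 * ((p : ℝ) - (k p : ℝ)) ^ γ / (ε * (k p : ℝ)))
      atTop (nhds 0) := by
  have hlim : Tendsto (fun p : ℕ => 4 / (ε * c1) * (p : ℝ) ^ (γ - α)) atTop (nhds 0) := by
    have h := (tendsto_rpow_neg_atTop (by linarith : 0 < α - γ)).comp
      (tendsto_natCast_atTop_atTop (R := ℝ))
    have : Tendsto (fun p : ℕ => (p : ℝ) ^ (γ - α)) atTop (nhds 0) := by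
      convert h using 2 with p
      · rw [Function.comp_apply]; norm_num
    simpa using this.const_mul (4 / (ε * c1))
  apply squeeze_zero'
  · filter_upwards [(kR_tendsto hα hc1 hk).eventually_gt_atTop 0,
      ev_half hα hα2 hc1 hk, eventually_ge_atTop 1] with p hkp hhalf hp1
    have hp0 : (0 : ℝ) < (p : ℝ) := by exact_mod_cast hp1
    have hpk0 : (0 : ℝ) ≤ (p : ℝ) - (k p : ℝ) := by linarith
    have h1 : (0 : ℝ) ≤ ((p : ℝ) - (k p : ℝ)) ^ γ := Real.rpow_nonneg hpk0 γ
    positivity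
  · filter_upwards [(base_tendsto hα hc1).eventually_ge_atTop 2,
      ev_half hα hα2 hc1 hk, eventually_ge_atTop 1] with p h2 hhalf hp1
    have hp0 : (0 : ℝ) < (p : ℝ) := by exact_mod_cast hp1
    have hkhalf : c1 * (p : ℝ) ^ α / 2 ≤ (k p : ℝ) := by
      have := k_ge hk p
      linarith
    have hpk0 : (0 : ℝ) ≤ (p : ℝ) - (k p : ℝ) := by linarith
    have hknum : ((p : ℝ) - (k p : ℝ)) ^ γ ≤ (p : ℝ) ^ γ := by
      apply Real.rpow_le_rpow hpk0 ?_ hγ0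
      have : (0 : ℝ) ≤ (k p : ℝ) := Nat.cast_nonneg _
      linarith
    have hden : 0 < ε * (c1 * (p : ℝ) ^ α / 2) := by positivity
    calc 2 * ((p : ℝ) - (k p : ℝ)) ^ γ / (ε * (k p : ℝ))
        ≤ 2 * (p : ℝ) ^ γ / (ε * (c1 * (p : ℝ) ^ α / 2)) := by
          apply div_le_div₀ (by positivity) (by linarith) hden
          exact mul_le_mul_of_nonneg_left hkhalf hε.le
      _ = 4 / (ε * c1) * (p : ℝ) ^ (γ - α) := by
          rw [Real.rpow_sub hp0]
          have hpα : (0 : ℝ) < (p : ℝ) ^ α := Real.rpow_pos_of_pos hp0 α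
          field_simp
          ring
  · exact hlim

end Asymp

set_option maxHeartbeats 2000000 in
/-- Proposition 2: success of the supervised top-`k` estimator. With
`k = ⌊c₁ p^α⌋`, `L = ⌈(2βk/λ) log(p-k)⌉` and `β > 1 - α`, the set `S_L` of the `k` largest
magnitudes of `w_L` recovers a `(1-ε)`-fraction of the support with probability tending to
one as `p → ∞`. -/
theorem stmt12 (α β lam c1 : ℝ)
    (hα : 0 < α) (hα2 : α < 1) (hβ : 0 < β) (hβ2 : β < 1)
    (hβα : 1 - α < β) (hlam : 0 < lam) (hc1 : 0 < c1)
    (k L : ℕ → ℕ)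
    (hk : ∀ p : ℕ, k p = ⌊c1 * (p : ℝ) ^ α⌋₊)
    (hL : ∀ p : ℕ, L p = ⌈2 * β * (k p : ℝ) * Real.log ((p : ℝ) - (k p : ℝ)) / lam⌉₊)
    (S : ∀ p : ℕ, Finset (Fin p)) (μ : ∀ p : ℕ, Fin p → ℝ)
    (hS : ∀ p, (S p).card = k p)
    (hμ0 : ∀ p, ∀ j, j ∉ S p → μ p j = 0)
    (hμ1 : ∀ p, ∀ j ∈ S p,
      μ p j = Real.sqrt (lam / (k p : ℝ)) ∨ μ p j = -Real.sqrt (lam / (k p : ℝ)))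
    (SL : ∀ p : ℕ, (Fin (L p) → (Fin p → ℝ) × ℝ) → Finset (Fin p))
    (hSL : ∀ (p : ℕ) d, IsTopAbs (k p) (wL d) (SL p d)) :
    ∀ ε ∈ Set.Ioo (0 : ℝ) 1, Tendsto (fun p : ℕ =>
      ((Measure.pi fun _ : Fin (L p) => labeledLaw (μ p))
        {d | 1 - ε < ((S p ∩ SL p d).card : ℝ) / (k p : ℝ)}).toReal)
      atTop (nhds 1) := by
  intro ε hε
  obtain ⟨hε0, hε1⟩ := hε
  -- constants
  have hnum : 0 < 1 - α + β := by linarith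
  have h2β : 0 < 2 * β := by linarith
  set θ : ℝ := Real.sqrt ((1 - α + β) / (2 * β)) with hθdef
  have hfrac_pos : 0 < (1 - α + β) / (2 * β) := div_pos hnum h2β
  have hθ0 : 0 < θ := Real.sqrt_pos.mpr hfrac_pos
  have hθsq : θ ^ 2 = (1 - α + β) / (2 * β) := Real.sq_sqrt hfrac_pos.le
  have hfrac_lt : (1 - α + β) / (2 * β) < 1 := by
    rw [div_lt_one h2β]; linarith
  have hθ1 : θ < 1 := by nlinarith [hθsq, hθ0]
  have hβθ : β * θ ^ 2 = (1 - α + β) / 2 := by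
    rw [hθsq]; field_simp
  set c : ℝ := β * (1 - θ) ^ 2 with hcdef
  have hcpos : 0 < c := mul_pos hβ (pow_pos (by linarith) 2)
  set γ : ℝ := (1 + α - β) / 2 with hγdef
  have hγ0 : 0 ≤ γ := by rw [hγdef]; linarith
  have hγα : γ < α := by rw [hγdef]; linarith
  have hγeq : 1 - β * θ ^ 2 = γ := by rw [hβθ, hγdef]; ring
  -- squeeze
  have hg1 := g1_tendsto hα hα2 hc1 hk (ε := ε) hcpos
  have hg2 := g2_tendsto hα hα2 hc1 hk hγ0 hγα hε0
  have hlow : Tendsto (fun p : ℕ => 1 - (((p : ℝ) - (k p : ℝ)) ^ (-c) / ε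
      + 2 * ((p : ℝ) - (k p : ℝ)) ^ γ / (ε * (k p : ℝ)))) atTop (nhds 1) := by
    have h := (hg1.add hg2).const_sub 1
    simpa using h
  refine tendsto_of_tendsto_of_tendsto_of_le_of_le' hlow tendsto_const_nhds ?_ ?_
  case _ =>
    -- eventual lower bound
    filter_upwards [(k_tendsto hα hc1 hk).eventually_ge_atTop 1,
      (pk_tendsto hα hα2 hc1 hk).eventually_ge_atTop 2] with p hk1 hpk2
    set kR : ℝ := (k p : ℝ) with hkRdef
    set X : ℝ := (p : ℝ) - kR with hXdef
    have hkR1 : (1 : ℝ) ≤ kR := by rw [hkRdef]; exact_mod_cast hk1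
    have hkRpos : 0 < kR := by linarith
    have hXpos : (0 : ℝ) < X := by simp only [hXdef]; linarith [hpk2]
    have hX2 : (2 : ℝ) ≤ X := hpk2
    have hlog : 0 < Real.log X := Real.log_pos (by linarith)
    have hLlb : 2 * β * kR * Real.log X / lam ≤ (L p : ℝ) := by
      rw [hL p]; exact Nat.le_ceil _
    have hLpos : 0 < L p := by
      rw [hL p]
      apply Nat.ceil_pos.mpr
      positivity
    set s' : ℝ := Real.sqrt (lam / kR) with hs'def
    have hs'pos : 0 < s' := Real.sqrt_pos.mpr (by positivity)
    have hs'sq : s' ^ 2 = lam / kR := Real.sq_sqrt (by positivity)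
    set τ : ℝ := θ * s' with hτdef
    have hτ0 : 0 ≤ τ := by positivity
    have hτs : τ ≤ s' := by
      calc τ = θ * s' := rfl
        _ ≤ 1 * s' := mul_le_mul_of_nonneg_right hθ1.le hs'pos.le
        _ = s' := one_mul s'
    -- exponential bounds
    have hB1 : rexp (-(L p : ℝ) * (s' - τ) ^ 2 / 2) ≤ X ^ (-c) := by
      have h1 : (s' - τ) ^ 2 = (1 - θ) ^ 2 * (lam / kR) := by
        rw [hτdef, ← hs'sq]; ring
      have h4 : 2 * β * kR * Real.log X / lam * ((s' - τ) ^ 2 / 2) = c * Real.log X := by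
        rw [h1, hcdef]
        field_simp
      have h2 : c * Real.log X ≤ (L p : ℝ) * (s' - τ) ^ 2 / 2 := by
        calc c * Real.log X = 2 * β * kR * Real.log X / lam * ((s' - τ) ^ 2 / 2) := h4.symm
          _ ≤ (L p : ℝ) * ((s' - τ) ^ 2 / 2) :=
            mul_le_mul_of_nonneg_right hLlb (by positivity)
          _ = (L p : ℝ) * (s' - τ) ^ 2 / 2 := by ring
      calc rexp (-(L p : ℝ) * (s' - τ) ^ 2 / 2) ≤ rexp (-(c * Real.log X)) := by
            apply Real.exp_le_exp.mpr
            linarith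
        _ = X ^ (-c) := by
            rw [Real.rpow_def_of_pos hXpos]
            congr 1
            ring
    have hB2 : rexp (-(L p : ℝ) * τ ^ 2 / 2) ≤ X ^ (γ - 1) := by
      have h1 : τ ^ 2 = θ ^ 2 * (lam / kR) := by
        rw [hτdef, ← hs'sq]; ring
      have h4 : 2 * β * kR * Real.log X / lam * (τ ^ 2 / 2) = β * θ ^ 2 * Real.log X := by
        rw [h1]
        field_simp
      have h2 : (1 - γ) * Real.log X ≤ (L p : ℝ) * τ ^ 2 / 2 := by
        calc (1 - γ) * Real.log X = β * θ ^ 2 * Real.log X := by rw [← hγeq]; ring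
          _ = 2 * β * kR * Real.log X / lam * (τ ^ 2 / 2) := h4.symm
          _ ≤ (L p : ℝ) * (τ ^ 2 / 2) := mul_le_mul_of_nonneg_right hLlb (by positivity)
          _ = (L p : ℝ) * τ ^ 2 / 2 := by ring
      calc rexp (-(L p : ℝ) * τ ^ 2 / 2) ≤ rexp (-((1 - γ) * Real.log X)) := by
            apply Real.exp_le_exp.mpr
            linarith
        _ = X ^ (γ - 1) := by
            rw [Real.rpow_def_of_pos hXpos]
            congr 1
            ring
    -- measurability
    have hQ1meas : ∀ j : Fin p, MeasurableSet {d : Fin (L p) → (Fin p → ℝ) × ℝ | |wL d j| ≤ τ} :=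
      fun j => measurableSet_le (measurable_wLj j).abs measurable_const
    have hQ2meas : ∀ j : Fin p, MeasurableSet {d : Fin (L p) → (Fin p → ℝ) × ℝ | τ < |wL d j|} :=
      fun j => measurableSet_lt measurable_const (measurable_wLj j).abs
    have hεk : 0 < ε * kR := by positivity
    -- Markov bounds
    have hb1 := markov_count (Measure.pi fun _ : Fin (L p) => labeledLaw (μ p)) (S p)
      (fun j d => |wL d j| ≤ τ) hQ1meas (ε * kR) hεk
    have hb2 := markov_count (Measure.pi fun _ : Fin (L p) => labeledLaw (μ p))
      (Finset.univ \ S p) (fun j d => τ < |wL d j|) hQ2meas (ε * kR) hεk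
    -- per-coordinate bounds
    have hterm1 : ∀ j ∈ S p,
        ((Measure.pi fun _ : Fin (L p) => labeledLaw (μ p)) {d | |wL d j| ≤ τ}).toReal
          ≤ rexp (-(L p : ℝ) * (s' - τ) ^ 2 / 2) :=
      fun j hj => tail_on (μ p) j hLpos s' τ hτ0 hτs (hμ1 p j hj)
    have hterm2 : ∀ j ∈ Finset.univ \ S p,
        ((Measure.pi fun _ : Fin (L p) => labeledLaw (μ p)) {d | τ < |wL d j|}).toReal
          ≤ 2 * rexp (-(L p : ℝ) * τ ^ 2 / 2) := by
      intro j hj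
      have hj' : j ∉ S p := (Finset.mem_sdiff.mp hj).2
      exact tail_off (μ p) j hLpos τ hτ0 (hμ0 p j hj')
    have hsum1 : (∑ j ∈ S p,
        ((Measure.pi fun _ : Fin (L p) => labeledLaw (μ p)) {d | |wL d j| ≤ τ}).toReal)
          ≤ kR * rexp (-(L p : ℝ) * (s' - τ) ^ 2 / 2) := by
      have := Finset.sum_le_card_nsmul (S p) _ _ hterm1
      rwa [hS p, nsmul_eq_mul] at this
    have hkp_le : k p ≤ p := by
      have := Finset.card_le_univ (S p)
      rwa [Fintype.card_fin, hS p] at this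
    have hcard : ((Finset.univ \ S p).card : ℝ) = X := by
      rw [Finset.card_sdiff_of_subset (Finset.subset_univ _), Finset.card_univ, Fintype.card_fin, hS p,
        Nat.cast_sub hkp_le]
    have hsum2 : (∑ j ∈ Finset.univ \ S p,
        ((Measure.pi fun _ : Fin (L p) => labeledLaw (μ p)) {d | τ < |wL d j|}).toReal)
          ≤ X * (2 * rexp (-(L p : ℝ) * τ ^ 2 / 2)) := by
      have := Finset.sum_le_card_nsmul (Finset.univ \ S p) _ _ hterm2
      rwa [nsmul_eq_mul, hcard] at this
    -- combine
    have hbad1 : ((Measure.pi fun _ : Fin (L p) => labeledLaw (μ p))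
        {d | ε * kR ≤ (((S p).filter (fun j => |wL d j| ≤ τ)).card : ℝ)}).toReal
          ≤ X ^ (-c) / ε := by
      refine hb1.trans ?_
      calc (∑ j ∈ S p,
          ((Measure.pi fun _ : Fin (L p) => labeledLaw (μ p)) {d | |wL d j| ≤ τ}).toReal)
            / (ε * kR)
          ≤ (kR * rexp (-(L p : ℝ) * (s' - τ) ^ 2 / 2)) / (ε * kR) := by
            apply div_le_div_of_nonneg_right hsum1 hεk.le
        _ = rexp (-(L p : ℝ) * (s' - τ) ^ 2 / 2) / ε := by
            rw [mul_comm ε kR, mul_div_mul_left _ _ (ne_of_gt hkRpos)]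
        _ ≤ X ^ (-c) / ε := by
            apply div_le_div_of_nonneg_right hB1 hε0.le
    have hbad2 : ((Measure.pi fun _ : Fin (L p) => labeledLaw (μ p))
        {d | ε * kR ≤ (((Finset.univ \ S p).filter (fun j => τ < |wL d j|)).card : ℝ)}).toReal
          ≤ 2 * X ^ γ / (ε * kR) := by
      refine hb2.trans ?_
      have hXγ : X * (2 * X ^ (γ - 1)) = 2 * X ^ γ := by
        have h := Real.rpow_add hXpos 1 (γ - 1)
        rw [show (1 : ℝ) + (γ - 1) = γ by ring, Real.rpow_one] at h
        rw [h]; ring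
      calc (∑ j ∈ Finset.univ \ S p,
          ((Measure.pi fun _ : Fin (L p) => labeledLaw (μ p)) {d | τ < |wL d j|}).toReal)
            / (ε * kR)
          ≤ (X * (2 * rexp (-(L p : ℝ) * τ ^ 2 / 2))) / (ε * kR) := by
            apply div_le_div_of_nonneg_right hsum2 hεk.le
        _ ≤ (X * (2 * X ^ (γ - 1))) / (ε * kR) := by
            apply div_le_div_of_nonneg_right ?_ hεk.le
            apply mul_le_mul_of_nonneg_left ?_ hXpos.le
            exact mul_le_mul_of_nonneg_left hB2 (by norm_num)
        _ = 2 * X ^ γ / (ε * kR) := by rw [hXγ]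
    -- good event
    set good : Set (Fin (L p) → (Fin p → ℝ) × ℝ) :=
      {d | (((S p).filter (fun j => |wL d j| ≤ τ)).card : ℝ) < ε * kR}
        ∩ {d | (((Finset.univ \ S p).filter (fun j => τ < |wL d j|)).card : ℝ) < ε * kR}
      with hgooddef
    have hN1meas : Measurable (fun d : Fin (L p) → (Fin p → ℝ) × ℝ =>
        (((S p).filter (fun j => |wL d j| ≤ τ)).card : ℝ)) := by
      apply measurable_from_top.comp
      simp only [Finset.card_filter]
      exact Finset.measurable_sum _ (fun j _ =>
        Measurable.ite (hQ1meas j) measurable_const measurable_const)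
    have hN2meas : Measurable (fun d : Fin (L p) → (Fin p → ℝ) × ℝ =>
        (((Finset.univ \ S p).filter (fun j => τ < |wL d j|)).card : ℝ)) := by
      apply measurable_from_top.comp
      simp only [Finset.card_filter]
      exact Finset.measurable_sum _ (fun j _ =>
        Measurable.ite (hQ2meas j) measurable_const measurable_const)
    have hgoodmeas : MeasurableSet good := by
      apply MeasurableSet.inter
      · exact measurableSet_lt hN1meas measurable_const
      · exact measurableSet_lt hN2meas measurable_const
    -- deterministic inclusion
    have hGsub : good ⊆ {d : Fin (L p) → (Fin p → ℝ) × ℝ |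
        1 - ε < ((S p ∩ SL p d).card : ℝ) / kR} := by
      rintro d ⟨h1, h2⟩
      simp only [Set.mem_setOf_eq] at h1 h2 ⊢
      have hcomb := combin (k p) (wL d) (S p) (SL p d) (hS p) (hSL p d) τ
      have hcomb' : (k p : ℝ) ≤ ((S p ∩ SL p d).card : ℝ)
          + max (((S p).filter (fun j => |wL d j| ≤ τ)).card : ℝ)
              (((Finset.univ \ S p).filter (fun j => τ < |wL d j|)).card : ℝ) := by
        have := (Nat.cast_le (α := ℝ)).mpr hcomb
        push_cast at this
        exact this
      have hmax : max (((S p).filter (fun j => |wL d j| ≤ τ)).card : ℝ)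
          (((Finset.univ \ S p).filter (fun j => τ < |wL d j|)).card : ℝ) < ε * kR :=
        max_lt h1 h2
      rw [lt_div_iff₀ hkRpos]
      have hkReq : (k p : ℝ) = kR := rfl
      rw [hkReq] at hcomb'
      have h5 : kR - ε * kR < ((S p ∩ SL p d).card : ℝ) := by
        linarith only [hcomb', hmax]
      calc (1 - ε) * kR = kR - ε * kR := by ring
        _ < ((S p ∩ SL p d).card : ℝ) := h5
    -- complement
    have hcompl : goodᶜ ⊆
        {d : Fin (L p) → (Fin p → ℝ) × ℝ |
          ε * kR ≤ (((S p).filter (fun j => |wL d j| ≤ τ)).card : ℝ)}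
        ∪ {d | ε * kR ≤ (((Finset.univ \ S p).filter (fun j => τ < |wL d j|)).card : ℝ)} := by
      intro d hd
      simp only [hgooddef, Set.mem_compl_iff, Set.mem_inter_iff, Set.mem_setOf_eq,
        not_and_or, not_lt] at hd
      simpa [Set.mem_union, Set.mem_setOf_eq] using hd
    -- assemble
    have htop : ∀ s : Set (Fin (L p) → (Fin p → ℝ) × ℝ),
        (Measure.pi fun _ : Fin (L p) => labeledLaw (μ p)) s ≠ ⊤ :=
      fun s => measure_ne_top _ s
    have hM1 : (Measure.pi fun _ : Fin (L p) => labeledLaw (μ p)) good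
        + (Measure.pi fun _ : Fin (L p) => labeledLaw (μ p)) goodᶜ = 1 :=
      prob_add_prob_compl hgoodmeas
    have hsumReal : ((Measure.pi fun _ : Fin (L p) => labeledLaw (μ p)) good).toReal
        + ((Measure.pi fun _ : Fin (L p) => labeledLaw (μ p)) goodᶜ).toReal = 1 := by
      rw [← ENNReal.toReal_add (htop _) (htop _), hM1]
      simp
    have hunion : ((Measure.pi fun _ : Fin (L p) => labeledLaw (μ p)) goodᶜ).toReal
        ≤ ((Measure.pi fun _ : Fin (L p) => labeledLaw (μ p))
            {d | ε * kR ≤ (((S p).filter (fun j => |wL d j| ≤ τ)).card : ℝ)}).toReal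
          + ((Measure.pi fun _ : Fin (L p) => labeledLaw (μ p))
            {d | ε * kR ≤ (((Finset.univ \ S p).filter (fun j => τ < |wL d j|)).card : ℝ)}).toReal
        := by
      have h := (measure_mono (μ := Measure.pi fun _ : Fin (L p) => labeledLaw (μ p))
        hcompl).trans (measure_union_le _ _)
      have h2 := ENNReal.toReal_mono (by simp [ENNReal.add_ne_top, htop _]) h
      rwa [ENNReal.toReal_add (htop _) (htop _)] at h2
    have hG : ((Measure.pi fun _ : Fin (L p) => labeledLaw (μ p)) good).toReal
        ≤ ((Measure.pi fun _ : Fin (L p) => labeledLaw (μ p))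
          {d | 1 - ε < ((S p ∩ SL p d).card : ℝ) / kR}).toReal :=
      ENNReal.toReal_mono (htop _)
        (measure_mono (μ := Measure.pi fun _ : Fin (L p) => labeledLaw (μ p)) hGsub)
    show 1 - (X ^ (-c) / ε + 2 * X ^ γ / (ε * kR))
        ≤ ((Measure.pi fun _ : Fin (L p) => labeledLaw (μ p))
          {d | 1 - ε < ((S p ∩ SL p d).card : ℝ) / kR}).toReal
    linarith only [hbad1, hbad2, hsumReal, hunion, hG]
  case _ =>
    filter_upwards with p
    have h := prob_le_one (μ := Measure.pi fun _ : Fin (L p) => labeledLaw (μ p))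
      (s := {d | 1 - ε < ((S p ∩ SL p d).card : ℝ) / (k p : ℝ)})
    have := ENNReal.toReal_mono ENNReal.one_ne_top h
    simpa using this
end
end

section
/- Let R₁,…,R_n be i.i.d. Rademacher random variables (uniform on {−1,+1}), let L > 0 be a real number, and let d be a nonnegative integer. Then E[(L + Σ_{i=1}^n R_i)^d] ≤ (L + nd/(2L))^d. -/
open Finset

/-- double factorial (2l-1)!! -/
def df : ℕ → ℕ
  | 0 => 1
  | (l+1) => (2*l+1) * df l

lemma df_fact (l : ℕ) : 2^l * l.factorial * df l = (2*l).factorial := by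
  induction l with
  | zero => simp [df]
  | succ l ih =>
    have h2 : 2*(l+1) = (2*l+1) + 1 := by ring
    rw [df, h2, Nat.factorial_succ (2*l+1), Nat.factorial_succ (2*l), Nat.factorial_succ l,
      ← ih, pow_succ]
    ring

lemma two_pow_fact_le (m : ℕ) : 2^m * m.factorial ≤ (2*m).factorial := by
  induction m with
  | zero => simp
  | succ m ih =>
    have h2 : 2*(m+1) = (2*m+1) + 1 := by ring
    rw [h2, Nat.factorial_succ, Nat.factorial_succ, pow_succ]
    calc 2 ^ m * 2 * ((m+1) * m.factorial) = (2*m+2) * (2^m * m.factorial) := by ring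
    _ ≤ (2*m+2) * (2*m).factorial := Nat.mul_le_mul_left _ ih
    _ ≤ (2*m+1+1) * ((2*m+1) * (2*m).factorial) := by
        apply Nat.mul_le_mul
        · omega
        · exact Nat.le_mul_of_pos_left _ (by omega)

lemma fact_le_pow (d m k : ℕ) (h : m + k ≤ d) : (m+k).factorial ≤ m.factorial * d^k := by
  induction k with
  | zero => simp
  | succ k ih =>
    have h' : m + k ≤ d := by omega
    calc (m+(k+1)).factorial = (m+k+1) * (m+k).factorial := by
          rw [← Nat.factorial_succ]; ring_nf
    _ ≤ d * (m.factorial * d^k) := Nat.mul_le_mul (by omega) (ih h')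
    _ = m.factorial * d^(k+1) := by ring

lemma N1 (d l : ℕ) (h : 2*l ≤ d) :
    2^l * Nat.choose d (2*l) * df l ≤ Nat.choose d l * d^l := by
  have hF : 0 < l.factorial * (d - 2*l).factorial :=
    Nat.mul_pos l.factorial_pos (Nat.factorial_pos _)
  apply Nat.le_of_mul_le_mul_right _ hF
  have e1 : 2^l * Nat.choose d (2*l) * df l * (l.factorial * (d-2*l).factorial)
      = Nat.choose d (2*l) * (2*l).factorial * (d-2*l).factorial := by
    rw [← df_fact]; ring
  rw [e1, Nat.choose_mul_factorial_mul_factorial h]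
  have e2 : d.factorial = Nat.choose d l * l.factorial * (d-l).factorial :=
    (Nat.choose_mul_factorial_mul_factorial (le_trans (by omega) h)).symm
  rw [e2]
  have e3 : (d-l).factorial ≤ (d-2*l).factorial * d^l := by
    have : d - l = (d - 2*l) + l := by omega
    rw [this]
    exact fact_le_pow d _ l (by omega)
  calc Nat.choose d l * l.factorial * (d-l).factorial
      ≤ Nat.choose d l * l.factorial * ((d-2*l).factorial * d^l) :=
        Nat.mul_le_mul_left _ e3
    _ = Nat.choose d l * d^l * (l.factorial * (d-2*l).factorial) := by ring

lemma N2 (l j : ℕ) (h : j ≤ l) :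
    Nat.choose (2*l) (2*j) * df j ≤ Nat.choose l j * df l := by
  have hF : 0 < 2^j * j.factorial * (2*l-2*j).factorial :=
    Nat.mul_pos (Nat.mul_pos (pow_pos (by norm_num) _) j.factorial_pos)
      (Nat.factorial_pos _)
  apply Nat.le_of_mul_le_mul_right _ hF
  have e1 : Nat.choose (2*l) (2*j) * df j * (2^j * j.factorial * (2*l-2*j).factorial)
      = Nat.choose (2*l) (2*j) * (2*j).factorial * (2*l-2*j).factorial := by
    rw [← df_fact]; ring
  rw [e1, Nat.choose_mul_factorial_mul_factorial (by omega)]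
  have e3 : 2^(l-j) * (l-j).factorial ≤ (2*l-2*j).factorial := by
    have : 2*l - 2*j = 2*(l-j) := by omega
    rw [this]; exact two_pow_fact_le _
  calc (2*l).factorial = 2^l * l.factorial * df l := (df_fact l).symm
    _ = 2^l * (Nat.choose l j * j.factorial * (l-j).factorial) * df l := by
        rw [Nat.choose_mul_factorial_mul_factorial h]
    _ = Nat.choose l j * df l * (2^j * j.factorial * (2^(l-j) * (l-j).factorial)) := by
        have hp : (2:ℕ)^j * 2^(l-j) = 2^l := by
          rw [← pow_add]; congr 1; omega
        rw [← hp]; ring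
    _ ≤ Nat.choose l j * df l * (2^j * j.factorial * (2*l-2*j).factorial) := by
        apply Nat.mul_le_mul_left
        exact Nat.mul_le_mul_left _ e3
    _ = Nat.choose l j * df l * (2^j * j.factorial) * (2*l-2*j).factorial := by ring
    _ = Nat.choose l j * df l * (2^j * j.factorial * (2*l-2*j).factorial) := by ring

noncomputable def eps (b : Bool) : ℝ := if b then 1 else -1

noncomputable def Srad (n : ℕ) (s : Fin n → Bool) : ℝ := ∑ i, eps (s i)

noncomputable def Msum (n k : ℕ) : ℝ := ∑ s : Fin n → Bool, (Srad n s) ^ k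

lemma eps_not (b : Bool) : eps (!b) = - eps b := by cases b <;> simp [eps]

lemma msum_odd (n k : ℕ) (hk : Odd k) : Msum n k = 0 := by
  have e : Msum n k = ∑ s : Fin n → Bool, (Srad n (fun i => !(s i))) ^ k := by
    unfold Msum
    apply Fintype.sum_equiv (Equiv.arrowCongr (Equiv.refl (Fin n))
      ⟨Bool.not, Bool.not, Bool.not_not, Bool.not_not⟩)
    intro s
    simp [Equiv.arrowCongr, Function.comp]
  have e2 : ∀ s : Fin n → Bool, Srad n (fun i => !(s i)) = - Srad n s := by
    intro s
    unfold Srad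
    rw [← Finset.sum_neg_distrib]
    exact Finset.sum_congr rfl fun i _ => eps_not _
  have key : Msum n k = - Msum n k := by
    calc Msum n k = ∑ s : Fin n → Bool, (- Srad n s) ^ k := by
          rw [e]; exact Finset.sum_congr rfl fun s _ => by rw [e2]
    _ = ∑ s : Fin n → Bool, -((Srad n s) ^ k) := Finset.sum_congr rfl fun s _ => hk.neg_pow _
    _ = - Msum n k := by rw [Msum, ← Finset.sum_neg_distrib]
  linarith

lemma srad_cons (n : ℕ) (b : Bool) (s : Fin n → Bool) :
    Srad (n+1) (Fin.cons b s) = eps b + Srad n s := by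
  unfold Srad
  rw [Fin.sum_univ_succ]
  simp

lemma msum_rec (n k : ℕ) :
    Msum (n+1) k = ∑ j ∈ Finset.range (k+1),
      (Nat.choose k j : ℝ) * Msum n j * (1 + (-1:ℝ)^(k-j)) := by
  have e0 : Msum (n+1) k
      = ∑ p : Bool × (Fin n → Bool), (Srad (n+1) (Fin.cons p.1 p.2)) ^ k := by
    unfold Msum
    exact (Fintype.sum_equiv (Fin.consEquiv (fun _ => Bool)) _ _ (fun p => rfl)).symm
  rw [e0, Fintype.sum_prod_type]
  rw [Fintype.sum_bool]
  have e1 : ∀ (b : Bool), ∑ s : Fin n → Bool, (Srad (n+1) (Fin.cons b s)) ^ k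
      = ∑ j ∈ Finset.range (k+1),
          (Nat.choose k j : ℝ) * Msum n j * (eps b)^(k-j) := by
    intro b
    have : ∀ s : Fin n → Bool, (Srad (n+1) (Fin.cons b s)) ^ k
        = ∑ j ∈ Finset.range (k+1), Srad n s ^ j * (eps b)^(k-j) * (Nat.choose k j : ℝ) := by
      intro s
      rw [srad_cons, add_comm, add_pow]
    rw [Finset.sum_congr rfl (fun s _ => this s), Finset.sum_comm]
    apply Finset.sum_congr rfl
    intro j _
    rw [← Finset.sum_mul, ← Finset.sum_mul]
    unfold Msum
    ring
  rw [e1 true, e1 false, ← Finset.sum_add_distrib]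
  apply Finset.sum_congr rfl
  intro j _
  have ht : eps true = 1 := rfl
  have hf : eps false = -1 := rfl
  rw [ht, hf, one_pow]
  ring

lemma sum_even (m : ℕ) (g : ℕ → ℝ) (h : ∀ j < 2*m+1, Odd j → g j = 0) :
    ∑ j ∈ Finset.range (2*m+1), g j = ∑ i ∈ Finset.range (m+1), g (2*i) := by
  induction m with
  | zero => simp
  | succ m ih =>
    have e : 2*(m+1)+1 = (2*m+1)+1+1 := by ring
    rw [e, Finset.sum_range_succ, Finset.sum_range_succ,
      ih (fun j hj hodd => h j (by omega) hodd), h (2*m+1) (by omega) ⟨m, by ring⟩,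
      Finset.sum_range_succ (f := fun i => g (2*i)) (n := m+1)]
    have e2 : 2*m+1+1 = 2*(m+1) := by ring
    rw [e2]
    ring

lemma msum_nonneg (n i : ℕ) : 0 ≤ Msum n (2*i) := by
  unfold Msum
  apply Finset.sum_nonneg
  intro s _
  rw [pow_mul]
  positivity

lemma msum_bound (n l : ℕ) : Msum n (2*l) ≤ 2^n * (n:ℝ)^l * (df l : ℝ) := by
  induction n generalizing l with
  | zero =>
    have e : Msum 0 (2*l) = (0:ℝ)^(2*l) := by
      simp [Msum, Srad]
    rw [e]
    cases l with
    | zero => norm_num [df]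
    | succ l =>
      rw [zero_pow (by omega)]
      positivity
  | succ n ih =>
    rw [msum_rec]
    rw [sum_even l _ (by
      intro j hj hodd
      obtain ⟨a, ha⟩ := hodd
      have : (-1:ℝ)^(2*l-j) = -1 := Odd.neg_one_pow ⟨l - a - 1, by omega⟩
      rw [this]
      ring)]
    have step : ∀ i ∈ Finset.range (l+1),
        (Nat.choose (2*l) (2*i) : ℝ) * Msum n (2*i) * (1 + (-1:ℝ)^(2*l-2*i))
          ≤ (Nat.choose l i : ℝ) * (df l : ℝ) * 2^(n+1) * (n:ℝ)^i := by
      intro i hi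
      have hil : i ≤ l := by
        have := Finset.mem_range.mp hi; omega
      have he : (-1:ℝ)^(2*l-2*i) = 1 := Even.neg_one_pow ⟨l - i, by omega⟩
      rw [he]
      have h1 : (Nat.choose (2*l) (2*i) : ℝ) * Msum n (2*i)
          ≤ (Nat.choose (2*l) (2*i) : ℝ) * (2^n * (n:ℝ)^i * (df i : ℝ)) := by
        apply mul_le_mul_of_nonneg_left (ih i) (by positivity)
      have h2 : (Nat.choose (2*l) (2*i) : ℝ) * (df i : ℝ)
          ≤ (Nat.choose l i : ℝ) * (df l : ℝ) := by
        have := N2 l i hil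
        exact_mod_cast Nat.cast_le.mpr this
      calc (Nat.choose (2*l) (2*i) : ℝ) * Msum n (2*i) * (1 + 1)
          ≤ (Nat.choose (2*l) (2*i) : ℝ) * (2^n * (n:ℝ)^i * (df i : ℝ)) * 2 := by
            linarith [h1]
        _ = ((Nat.choose (2*l) (2*i) : ℝ) * (df i : ℝ)) * (2^(n+1) * (n:ℝ)^i) := by ring
        _ ≤ ((Nat.choose l i : ℝ) * (df l : ℝ)) * (2^(n+1) * (n:ℝ)^i) := by
            apply mul_le_mul_of_nonneg_right h2 (by positivity)
        _ = (Nat.choose l i : ℝ) * (df l : ℝ) * 2^(n+1) * (n:ℝ)^i := by ring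
    calc ∑ i ∈ Finset.range (l+1),
          (Nat.choose (2*l) (2*i) : ℝ) * Msum n (2*i) * (1 + (-1:ℝ)^(2*l-2*i))
        ≤ ∑ i ∈ Finset.range (l+1),
            (Nat.choose l i : ℝ) * (df l : ℝ) * 2^(n+1) * (n:ℝ)^i :=
          Finset.sum_le_sum step
      _ = 2^(n+1) * ((n:ℝ)+1)^l * (df l : ℝ) := by
          rw [add_pow]
          rw [Finset.mul_sum, Finset.sum_mul]
          apply Finset.sum_congr rfl
          intro i _
          simp
          ring
      _ = 2^(n+1) * (((n+1 : ℕ) : ℝ))^l * (df l : ℝ) := by push_cast; ring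

lemma sum_even' (d : ℕ) (g : ℕ → ℝ) (h : ∀ j, Odd j → g j = 0) :
    ∑ j ∈ Finset.range (d+1), g j = ∑ i ∈ Finset.range (d/2+1), g (2*i) := by
  rcases Nat.even_or_odd d with ⟨m, hm⟩ | ⟨m, hm⟩
  · have hd : d = 2*m := by omega
    subst hd
    have h2 : 2*m/2 = m := by omega
    rw [h2]
    exact sum_even m g (fun j _ ho => h j ho)
  · have hd : d = 2*m+1 := by omega
    subst hd
    have h2 : (2*m+1)/2 = m := by omega
    rw [h2, Finset.sum_range_succ, h (2*m+1) ⟨m, by ring⟩, add_zero]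
    exact sum_even m g (fun j _ ho => h j ho)

/-- moment bound for a shifted Rademacher sum. For i.i.d. Rademacher
variables `R₁, …, R_n` (uniform signs, here encoded by averaging over all sign patterns
`s : Fin n → Bool`), any real `L > 0` and any natural number `d`,
`E[(L + ∑ Rᵢ)^d] ≤ (L + nd/(2L))^d`. -/
theorem stmt14 (n : ℕ) (L : ℝ) (hL : 0 < L) (d : ℕ) :
    ((2 : ℝ) ^ n)⁻¹ * ∑ s : Fin n → Bool,
        (L + ∑ i, (if s i then (1 : ℝ) else -1)) ^ d
      ≤ (L + (n : ℝ) * (d : ℝ) / (2 * L)) ^ d := by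
  set A : ℝ := (n : ℝ) * (d : ℝ) / (2 * L) with hA
  have hA0 : 0 ≤ A := by positivity
  rw [inv_mul_le_iff₀ (by positivity : (0:ℝ) < 2^n)]
  have hbody : ∀ s : Fin n → Bool,
      (L + ∑ i, (if s i then (1 : ℝ) else -1)) ^ d = (L + Srad n s) ^ d := fun s => rfl
  rw [Finset.sum_congr rfl (fun s _ => hbody s)]
  -- expand LHS
  have hexp : ∑ s : Fin n → Bool, (L + Srad n s) ^ d
      = ∑ k ∈ Finset.range (d+1), Msum n k * L^(d-k) * (Nat.choose d k : ℝ) := by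
    have h1 : ∀ s : Fin n → Bool, (L + Srad n s) ^ d
        = ∑ k ∈ Finset.range (d+1), (Srad n s)^k * L^(d-k) * (Nat.choose d k : ℝ) := by
      intro s
      rw [add_comm, add_pow]
    rw [Finset.sum_congr rfl (fun s _ => h1 s), Finset.sum_comm]
    apply Finset.sum_congr rfl
    intro k _
    rw [← Finset.sum_mul, ← Finset.sum_mul]
    unfold Msum
    ring
  rw [hexp]
  rw [sum_even' d _ (fun j ho => by rw [msum_odd n j ho]; ring)]
  -- expand RHS
  have hRHS : (2:ℝ)^n * (L + A)^d
      = ∑ k ∈ Finset.range (d+1), 2^n * (A^k * L^(d-k) * (Nat.choose d k : ℝ)) := by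
    rw [add_comm L A, add_pow, Finset.mul_sum]
  rw [hRHS]
  -- termwise comparison
  have step : ∀ i ∈ Finset.range (d/2+1),
      Msum n (2*i) * L^(d-2*i) * (Nat.choose d (2*i) : ℝ)
        ≤ 2^n * (A^i * L^(d-i) * (Nat.choose d i : ℝ)) := by
    intro i hi
    have h2i : 2*i ≤ d := by
      have := Finset.mem_range.mp hi
      omega
    have hA' : A^i = (n:ℝ)^i * (d:ℝ)^i / (2^i * L^i) := by
      rw [hA, div_pow, mul_pow, mul_pow]
    have hL' : L^(d-i) = L^(d-2*i) * L^i := by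
      rw [← pow_add]
      congr 1
      omega
    have key : (2:ℝ)^i * (Nat.choose d (2*i) : ℝ) * (df i : ℝ)
        ≤ (Nat.choose d i : ℝ) * (d:ℝ)^i := by
      have h := (Nat.cast_le (α := ℝ)).mpr (N1 d i h2i)
      push_cast at h
      convert h using 1 <;> ring
    have key2 : (df i : ℝ) * (Nat.choose d (2*i) : ℝ)
        ≤ (d:ℝ)^i * (Nat.choose d i : ℝ) / 2^i := by
      rw [le_div_iff₀ (by positivity : (0:ℝ) < 2^i)]
      nlinarith [key]
    have eR : (2:ℝ)^n * (A^i * L^(d-i) * (Nat.choose d i : ℝ))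
        = 2^n * (n:ℝ)^i * L^(d-2*i) * ((d:ℝ)^i * (Nat.choose d i : ℝ) / 2^i) := by
      rw [hA', hL']
      field_simp
    calc Msum n (2*i) * L^(d-2*i) * (Nat.choose d (2*i) : ℝ)
        ≤ (2^n * (n:ℝ)^i * (df i : ℝ)) * L^(d-2*i) * (Nat.choose d (2*i) : ℝ) := by
          apply mul_le_mul_of_nonneg_right _ (by positivity)
          exact mul_le_mul_of_nonneg_right (msum_bound n i) (by positivity)
      _ = 2^n * (n:ℝ)^i * L^(d-2*i) * ((df i : ℝ) * (Nat.choose d (2*i) : ℝ)) := by ring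
      _ ≤ 2^n * (n:ℝ)^i * L^(d-2*i) * ((d:ℝ)^i * (Nat.choose d i : ℝ) / 2^i) :=
          mul_le_mul_of_nonneg_left key2 (by positivity)
      _ = 2^n * (A^i * L^(d-i) * (Nat.choose d i : ℝ)) := eR.symm
  calc ∑ i ∈ Finset.range (d/2+1), Msum n (2*i) * L^(d-2*i) * (Nat.choose d (2*i) : ℝ)
      ≤ ∑ i ∈ Finset.range (d/2+1), 2^n * (A^i * L^(d-i) * (Nat.choose d i : ℝ)) :=
        Finset.sum_le_sum step
    _ ≤ ∑ k ∈ Finset.range (d+1), 2^n * (A^k * L^(d-k) * (Nat.choose d k : ℝ)) := by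
        apply Finset.sum_le_sum_of_subset_of_nonneg
        · apply Finset.range_subset_range.mpr
          omega
        · intro k _ _
          positivity
end

section
/- Let λ ∈ (0,1), let k be a positive integer, let w ~ N(0, (k−1)/k), and define q(w) = tanh(λ + √λ·w) − tanh²(λ + √λ·w). Then E[q(w)] ≤ 3√(λ/k). -/
open MeasureTheory ProbabilityTheory
open scoped ENNReal NNReal

namespace Stmt17Aux

lemma tanh_mul_aux (x : ℝ) :
    Real.tanh x * (1 + Real.exp (-x) ^ 2) = 1 - Real.exp (-x) ^ 2 := by
  have h := Real.exp_pos x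
  rw [Real.tanh_eq_sinh_div_cosh, Real.sinh_eq, Real.cosh_eq, Real.exp_neg]
  field_simp

lemma abs_tanh_le_one (x : ℝ) : |Real.tanh x| ≤ 1 := by
  have h := tanh_mul_aux x
  have h2 : (0:ℝ) < 1 + Real.exp (-x) ^ 2 := by positivity
  rw [abs_le]
  constructor <;> nlinarith [sq_nonneg (Real.exp (-x))]

lemma abs_q_le_two (x : ℝ) : |Real.tanh x - Real.tanh x ^ 2| ≤ 2 := by
  have h := abs_tanh_le_one x
  have h1 : |Real.tanh x - Real.tanh x ^ 2| ≤ |Real.tanh x| + |Real.tanh x ^ 2| :=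
    abs_sub _ _
  have h2 : |Real.tanh x ^ 2| = |Real.tanh x| ^ 2 := by rw [abs_pow]
  nlinarith [abs_nonneg (Real.tanh x)]

lemma continuous_tanh : Continuous Real.tanh := by
  have : Real.tanh = fun x => Real.sinh x / Real.cosh x :=
    funext fun x => Real.tanh_eq_sinh_div_cosh x
  rw [this]
  exact Real.continuous_sinh.div Real.continuous_cosh fun x => (Real.cosh_pos x).ne'

/-- The key pointwise inequality. -/
lemma key (γ x : ℝ) (hγ : 0 < γ) :
    (Real.tanh x - Real.tanh x ^ 2)
      + (Real.tanh (-x) - Real.tanh (-x) ^ 2) * Real.exp (-(2 * (1 + γ) * x))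
      ≤ (1 - Real.exp (-(2 * x)) - Real.exp (-(2 * γ * x))
          + Real.exp (-(2 * (1 + γ) * x))) / 2 := by
  have hu : Real.exp (-(2 * x)) = Real.exp (-x) ^ 2 := by
    rw [← Real.exp_nat_mul]; ring_nf
  set u := Real.exp (-x) with hudef
  set r := Real.exp (-(2 * γ * x)) with hrdef
  have hb : Real.exp (-(2 * (1 + γ) * x)) = u ^ 2 * r := by
    rw [hudef, hrdef, sq, ← Real.exp_add, ← Real.exp_add]; ring_nf
  have hupos : 0 < u := Real.exp_pos _
  have hrpos : 0 < r := Real.exp_pos _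
  have hsign : 0 ≤ (1 - u ^ 2) * (1 - r) := by
    rcases le_or_gt 0 x with hx | hx
    · have h1 : u ≤ 1 := Real.exp_le_one_iff.mpr (by linarith)
      have h2 : r ≤ 1 := Real.exp_le_one_iff.mpr (by nlinarith)
      have : u ^ 2 ≤ 1 := by nlinarith
      nlinarith
    · have h1 : 1 ≤ u := Real.one_le_exp (by linarith)
      have h2 : 1 ≤ r := Real.one_le_exp (by nlinarith)
      have : 1 ≤ u ^ 2 := by nlinarith
      nlinarith
  have ht := tanh_mul_aux x
  rw [Real.tanh_neg]
  set t := Real.tanh x with htdef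
  rw [hu, hb]
  have hden : (0:ℝ) < 1 + u ^ 2 := by positivity
  have htv : t = (1 - u ^ 2) / (1 + u ^ 2) := by
    field_simp
    linarith [ht]
  rw [htv]
  have hid : (1 - u ^ 2 - r + u ^ 2 * r) / 2
      - ((1 - u ^ 2) / (1 + u ^ 2) - ((1 - u ^ 2) / (1 + u ^ 2)) ^ 2
        + (-((1 - u ^ 2) / (1 + u ^ 2)) - (-((1 - u ^ 2) / (1 + u ^ 2))) ^ 2) * (u ^ 2 * r))
      = (1 - u ^ 2) ^ 2 * ((1 - u ^ 2) * (1 - r)) / (2 * (1 + u ^ 2) ^ 2) := by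
    field_simp
    ring
  have hnn : 0 ≤ (1 - u ^ 2) ^ 2 * ((1 - u ^ 2) * (1 - r)) / (2 * (1 + u ^ 2) ^ 2) :=
    div_nonneg (mul_nonneg (sq_nonneg _) hsign) (by positivity)
  linarith

lemma exp_mul_pdf (v : ℝ≥0) (hv : v ≠ 0) (c w : ℝ) :
    Real.exp (c * w) * gaussianPDFReal 0 v w
      = Real.exp (c ^ 2 * v / 2) * gaussianPDFReal (c * v) v w := by
  have hv' : (v : ℝ) ≠ 0 := by exact_mod_cast hv
  simp only [gaussianPDFReal, sub_zero]
  rw [mul_left_comm, mul_left_comm (Real.exp (c ^ 2 * v / 2)), ← Real.exp_add, ← Real.exp_add]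
  congr 1
  rw [Real.exp_eq_exp]
  field_simp
  ring

lemma integrable_exp_mul_pdf (v : ℝ≥0) (hv : v ≠ 0) (c : ℝ) :
    Integrable (fun w => Real.exp (c * w) * gaussianPDFReal 0 v w) := by
  have h : (fun w => Real.exp (c * w) * gaussianPDFReal 0 v w)
      = fun w => Real.exp (c ^ 2 * v / 2) * gaussianPDFReal (c * v) v w :=
    funext fun w => exp_mul_pdf v hv c w
  rw [h]
  exact (integrable_gaussianPDFReal _ _).const_mul _

lemma integral_exp_mul_pdf (v : ℝ≥0) (hv : v ≠ 0) (c : ℝ) :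
    ∫ w, Real.exp (c * w) * gaussianPDFReal 0 v w = Real.exp (c ^ 2 * v / 2) := by
  have h : (fun w => Real.exp (c * w) * gaussianPDFReal 0 v w)
      = fun w => Real.exp (c ^ 2 * v / 2) * gaussianPDFReal (c * v) v w :=
    funext fun w => exp_mul_pdf v hv c w
  rw [h, integral_const_mul, integral_gaussianPDFReal_eq_one _ hv, mul_one]

lemma integral_gaussianReal_eq (v : ℝ≥0) (hv : v ≠ 0) (f : ℝ → ℝ) :
    ∫ w, f w ∂(gaussianReal 0 v) = ∫ w, gaussianPDFReal 0 v w * f w := by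
  rw [gaussianReal_of_var_ne_zero 0 hv]
  have h : (gaussianPDF 0 v) = fun x => ((gaussianPDFReal 0 v x).toNNReal : ℝ≥0∞) := rfl
  rw [h, integral_withDensity_eq_integral_smul
    ((measurable_gaussianPDFReal 0 v).real_toNNReal) f]
  congr 1
  ext w
  rw [NNReal.smul_def, Real.coe_toNNReal _ (gaussianPDFReal_nonneg 0 v w), smul_eq_mul]

lemma pdf_reflect (v : ℝ≥0) (hv : v ≠ 0) (a w : ℝ) :
    gaussianPDFReal 0 v (-(2 * a) - w)
      = gaussianPDFReal 0 v w * Real.exp (-(2 * (a ^ 2 + a * w)) / v) := by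
  have hv' : (v : ℝ) ≠ 0 := by exact_mod_cast hv
  simp only [gaussianPDFReal, sub_zero]
  conv_rhs => rw [mul_assoc]
  rw [← Real.exp_add]
  congr 1
  rw [Real.exp_eq_exp]
  field_simp
  ring

end Stmt17Aux


open MeasureTheory ProbabilityTheory
open scoped ENNReal NNReal


/-- for `λ ∈ (0,1)`, a positive integer `k`, `w ~ N(0, (k-1)/k)` and
`q(w) = tanh(λ + √λ w) - tanh²(λ + √λ w)`, we have `E[q(w)] ≤ 3 √(λ/k)`. -/
theorem stmt17 (lam : ℝ) (hlam : lam ∈ Set.Ioo (0 : ℝ) 1) (k : ℕ) (hk : 0 < k)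
    (q : ℝ → ℝ)
    (hq : q = fun w => Real.tanh (lam + Real.sqrt lam * w)
      - Real.tanh (lam + Real.sqrt lam * w) ^ 2) :
    (∫ w, q w ∂(gaussianReal 0 (((k - 1 : ℕ) : ℝ≥0) / (k : ℝ≥0))))
      ≤ 3 * Real.sqrt (lam / k) := by
  obtain ⟨hl0, hl1⟩ := hlam
  -- basic facts about sqrt lam
  have ha2 : Real.sqrt lam ^ 2 = lam := Real.sq_sqrt hl0.le
  have ha0 : 0 < Real.sqrt lam := Real.sqrt_pos.mpr hl0
  rcases eq_or_lt_of_le (show 1 ≤ k from hk) with hk1 | hk2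
  · -- k = 1 : dirac measure at 0
    have hk1' : k = 1 := hk1.symm
    subst hk1'
    have hV : (((1 - 1 : ℕ) : ℝ≥0) / ((1 : ℕ) : ℝ≥0)) = 0 := by norm_num
    rw [hV, gaussianReal_zero_var, integral_dirac, hq]
    simp only [mul_zero, add_zero]
    have h1 : Real.tanh lam - Real.tanh lam ^ 2 ≤ Real.tanh lam := by
      nlinarith [sq_nonneg (Real.tanh lam)]
    have h2 : Real.tanh lam ≤ 1 - Real.exp (-lam) ^ 2 := by
      have h := Stmt17Aux.tanh_mul_aux lam
      have hu1 : Real.exp (-lam) ≤ 1 := Real.exp_le_one_iff.mpr (by linarith)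
      have hup : 0 < Real.exp (-lam) := Real.exp_pos _
      have ht0 : 0 ≤ Real.tanh lam := by nlinarith
      nlinarith
    have h3 : 1 - Real.exp (-lam) ^ 2 ≤ 2 * lam := by
      have := Real.add_one_le_exp (-(2 * lam))
      have he : Real.exp (-(2 * lam)) = Real.exp (-lam) ^ 2 := by
        rw [sq, ← Real.exp_add]; ring_nf
      nlinarith
    have h4 : lam ≤ Real.sqrt lam := by
      nlinarith [Real.sqrt_le_one.mpr hl1.le, Real.sqrt_nonneg lam]
    have h5 : Real.sqrt (lam / 1) = Real.sqrt lam := by norm_num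
    push_cast
    rw [h5]
    linarith
  · -- k ≥ 2
    have hkR : (2:ℝ) ≤ (k:ℝ) := by exact_mod_cast hk2
    have hk1R : (0:ℝ) < (k:ℝ) - 1 := by linarith
    have hk0R : (0:ℝ) < (k:ℝ) := by linarith
    set V : ℝ≥0 := ((k - 1 : ℕ) : ℝ≥0) / ((k : ℕ) : ℝ≥0) with hVdef
    have hVr : (V : ℝ) = ((k:ℝ) - 1) / (k:ℝ) := by
      rw [hVdef, NNReal.coe_div, NNReal.coe_natCast, NNReal.coe_natCast, Nat.cast_sub hk,
        Nat.cast_one]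
    have hVrpos : (0:ℝ) < (V:ℝ) := by rw [hVr]; positivity
    have hV0 : V ≠ 0 := by
      intro h
      rw [h] at hVrpos
      simp at hVrpos
    have hV0r : (V:ℝ) ≠ 0 := ne_of_gt hVrpos
    set a : ℝ := Real.sqrt lam with hadef
    set γ : ℝ := 1 / ((k:ℝ) - 1) with hγdef
    have hγ0 : 0 < γ := by rw [hγdef]; positivity
    have hVβ : (V:ℝ) * (1 + γ) = 1 := by
      rw [hVr, hγdef]; field_simp; ring
    set p : ℝ → ℝ := gaussianPDFReal 0 V with hpdef
    have hp_int : Integrable p := integrable_gaussianPDFReal 0 V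
    have hp_nonneg : ∀ w, 0 ≤ p w := fun w => gaussianPDFReal_nonneg 0 V w
    have hp_cont : Continuous p := by
      rw [hpdef, gaussianPDFReal_def]
      fun_prop
    set X : ℝ → ℝ := fun w => lam + a * w with hXdef
    have hX_cont : Continuous X := by rw [hXdef]; fun_prop
    set F1 : ℝ → ℝ := fun w => p w * (Real.tanh (X w) - Real.tanh (X w) ^ 2) with hF1def
    set F2 : ℝ → ℝ := fun w =>
      p w * ((Real.tanh (-(X w)) - Real.tanh (-(X w)) ^ 2)
        * Real.exp (-(2 * (1 + γ) * (X w)))) with hF2def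
    set G : ℝ → ℝ := fun w =>
      (p w - Real.exp (-(2 * lam)) * (Real.exp (-(2 * a) * w) * p w)
        - Real.exp (-(2 * γ * lam)) * (Real.exp (-(2 * γ * a) * w) * p w)
        + Real.exp (-(2 * (1 + γ) * lam)) * (Real.exp (-(2 * (1 + γ) * a) * w) * p w)) / 2
      with hGdef
    -- Step A
    have hA : (∫ w, q w ∂(gaussianReal 0 V)) = ∫ w, F1 w := by
      rw [Stmt17Aux.integral_gaussianReal_eq V hV0 q]
      congr 1
      funext w
      rw [hq, hF1def]
    -- Step B : reflection
    have hB : (∫ w, F1 w) = ∫ w, F2 w := by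
      rw [← integral_sub_left_eq_self F1 volume (-(2 * a))]
      congr 1
      funext w
      have hx : X (-(2 * a) - w) = -(X w) := by
        rw [hXdef]
        simp only
        rw [← ha2]
        ring
      have hpref : p (-(2 * a) - w) = p w * Real.exp (-(2 * (1 + γ) * (X w))) := by
        rw [hpdef, Stmt17Aux.pdf_reflect V hV0 a w]
        congr 1
        rw [Real.exp_eq_exp, div_eq_iff hV0r]
        rw [hXdef]
        simp only
        linear_combination (-2:ℝ) * ha2 + (2 * (lam + a * w)) * hVβ
      rw [hF1def, hF2def]
      simp only
      rw [hx, hpref]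
      ring
    -- Integrability
    have hexp_int : ∀ c : ℝ, Integrable (fun w => Real.exp (c * w) * p w) := fun c => by
      rw [hpdef]; exact Stmt17Aux.integrable_exp_mul_pdf V hV0 c
    have hq_bound : ∀ y : ℝ, |Real.tanh y - Real.tanh y ^ 2| ≤ 2 := Stmt17Aux.abs_q_le_two
    have hI1 : Integrable F1 := by
      apply Integrable.mono' (hp_int.const_mul 2)
      · exact (hp_cont.mul ((Stmt17Aux.continuous_tanh.comp hX_cont).sub
          ((Stmt17Aux.continuous_tanh.comp hX_cont).pow 2))).aestronglyMeasurable
      · filter_upwards with w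
        rw [hF1def]
        simp only [Real.norm_eq_abs, abs_mul, abs_of_nonneg (hp_nonneg w)]
        calc p w * |Real.tanh (X w) - Real.tanh (X w) ^ 2| ≤ p w * 2 :=
              mul_le_mul_of_nonneg_left (hq_bound (X w)) (hp_nonneg w)
          _ = 2 * p w := by ring
    have hI2 : Integrable F2 := by
      apply Integrable.mono'
        (((hexp_int (-(2 * (1 + γ) * a))).const_mul (2 * Real.exp (-(2 * (1 + γ) * lam)))))
      · apply Continuous.aestronglyMeasurable
        rw [hF2def]
        have hct : Continuous fun w => Real.tanh (-(X w)) :=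
          Stmt17Aux.continuous_tanh.comp hX_cont.neg
        exact hp_cont.mul ((hct.sub (hct.pow 2)).mul
          (Real.continuous_exp.comp ((continuous_const.mul hX_cont).neg)))
      · filter_upwards with w
        rw [hF2def]
        simp only [Real.norm_eq_abs, abs_mul, abs_of_nonneg (hp_nonneg w),
          abs_of_nonneg (Real.exp_nonneg _)]
        have hsplit : Real.exp (-(2 * (1 + γ) * (X w)))
            = Real.exp (-(2 * (1 + γ) * lam)) * Real.exp (-(2 * (1 + γ) * a) * w) := by
          rw [← Real.exp_add, hXdef]
          simp only
          ring_nf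
        calc p w * (|Real.tanh (-(X w)) - Real.tanh (-(X w)) ^ 2|
                * Real.exp (-(2 * (1 + γ) * (X w))))
            ≤ p w * (2 * Real.exp (-(2 * (1 + γ) * (X w)))) := by
              apply mul_le_mul_of_nonneg_left _ (hp_nonneg w)
              exact mul_le_mul_of_nonneg_right (hq_bound _) (Real.exp_nonneg _)
          _ = 2 * Real.exp (-(2 * (1 + γ) * lam))
                * (Real.exp (-(2 * (1 + γ) * a) * w) * p w) := by
              rw [hsplit]; ring
    have hIG : Integrable G := by
      rw [hGdef]
      exact (((hp_int.sub ((hexp_int (-(2 * a))).const_mul _)).sub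
        ((hexp_int (-(2 * γ * a))).const_mul _)).add
        ((hexp_int (-(2 * (1 + γ) * a))).const_mul _)).div_const 2
    -- pointwise bound
    have hptw : ∀ w, F1 w + F2 w ≤ G w := by
      intro w
      have hkey := Stmt17Aux.key γ (X w) hγ0
      have he1 : Real.exp (-(2 * lam)) * Real.exp (-(2 * a) * w)
          = Real.exp (-(2 * (X w))) := by
        rw [← Real.exp_add, hXdef]; simp only; ring_nf
      have he2 : Real.exp (-(2 * γ * lam)) * Real.exp (-(2 * γ * a) * w)
          = Real.exp (-(2 * γ * (X w))) := by
        rw [← Real.exp_add, hXdef]; simp only; ring_nf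
      have he3 : Real.exp (-(2 * (1 + γ) * lam)) * Real.exp (-(2 * (1 + γ) * a) * w)
          = Real.exp (-(2 * (1 + γ) * (X w))) := by
        rw [← Real.exp_add, hXdef]; simp only; ring_nf
      have hGw : G w = p w * ((1 - Real.exp (-(2 * (X w))) - Real.exp (-(2 * γ * (X w)))
          + Real.exp (-(2 * (1 + γ) * (X w)))) / 2) := by
        rw [hGdef]
        simp only
        rw [← he1, ← he2, ← he3]
        ring
      have hsum : F1 w + F2 w = p w * ((Real.tanh (X w) - Real.tanh (X w) ^ 2)
          + (Real.tanh (-(X w)) - Real.tanh (-(X w)) ^ 2)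
            * Real.exp (-(2 * (1 + γ) * (X w)))) := by
        rw [hF1def, hF2def]; ring
      rw [hsum, hGw]
      exact mul_le_mul_of_nonneg_left hkey (hp_nonneg w)
    -- value of ∫ G
    have hc1 : (-(2 * a)) ^ 2 = 4 * lam := by rw [← ha2]; ring
    have hc2 : (-(2 * γ * a)) ^ 2 = 4 * γ ^ 2 * lam := by rw [← ha2]; ring
    have hc3 : (-(2 * (1 + γ) * a)) ^ 2 = 4 * (1 + γ) ^ 2 * lam := by rw [← ha2]; ring
    have hE1 : -(2 * lam) + (-(2 * a)) ^ 2 * (V:ℝ) / 2 = -(2 * (lam / (k:ℝ))) := by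
      rw [hc1, hVr]; field_simp; ring
    have hE2 : -(2 * γ * lam) + (-(2 * γ * a)) ^ 2 * (V:ℝ) / 2 = -(2 * (lam / (k:ℝ))) := by
      rw [hc2, hVr, hγdef]; field_simp; ring
    have hE3 : -(2 * (1 + γ) * lam) + (-(2 * (1 + γ) * a)) ^ 2 * (V:ℝ) / 2 = 0 := by
      rw [hc3, hVr, hγdef]; field_simp; ring
    have hGval : (∫ w, G w) = 1 - Real.exp (-(2 * (lam / (k:ℝ)))) := by
      have iA : Integrable (fun w => Real.exp (-(2 * lam))
          * (Real.exp (-(2 * a) * w) * p w)) := (hexp_int (-(2 * a))).const_mul _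
      have iB : Integrable (fun w => Real.exp (-(2 * γ * lam))
          * (Real.exp (-(2 * γ * a) * w) * p w)) := (hexp_int (-(2 * γ * a))).const_mul _
      have iC : Integrable (fun w => Real.exp (-(2 * (1 + γ) * lam))
          * (Real.exp (-(2 * (1 + γ) * a) * w) * p w)) :=
        (hexp_int (-(2 * (1 + γ) * a))).const_mul _
      have iAB : Integrable (fun w => p w - Real.exp (-(2 * lam))
          * (Real.exp (-(2 * a) * w) * p w)) := hp_int.sub iA
      have iABC : Integrable (fun w => p w - Real.exp (-(2 * lam))
          * (Real.exp (-(2 * a) * w) * p w) - Real.exp (-(2 * γ * lam))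
          * (Real.exp (-(2 * γ * a) * w) * p w)) := iAB.sub iB
      rw [hGdef]
      simp only
      rw [integral_div]
      rw [integral_add iABC iC, integral_sub iAB iB, integral_sub hp_int iA]
      rw [integral_const_mul, integral_const_mul, integral_const_mul]
      rw [hpdef]
      rw [integral_gaussianPDFReal_eq_one _ hV0]
      rw [Stmt17Aux.integral_exp_mul_pdf V hV0 (-(2 * a)),
        Stmt17Aux.integral_exp_mul_pdf V hV0 (-(2 * γ * a)),
        Stmt17Aux.integral_exp_mul_pdf V hV0 (-(2 * (1 + γ) * a))]
      rw [← Real.exp_add, ← Real.exp_add, ← Real.exp_add]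
      rw [hE1, hE2, hE3, Real.exp_zero]
      ring
    -- put everything together
    have h2J : (∫ w, q w ∂(gaussianReal 0 V)) + (∫ w, q w ∂(gaussianReal 0 V))
        ≤ 1 - Real.exp (-(2 * (lam / (k:ℝ)))) := by
      rw [hA]
      nth_rewrite 2 [hB]
      rw [← integral_add hI1 hI2, ← hGval]
      exact integral_mono (hI1.add hI2) hIG hptw
    have hD0 : (0:ℝ) < lam / (k:ℝ) := by positivity
    have hD1 : lam / (k:ℝ) ≤ 1 := by
      rw [div_le_one hk0R]; linarith
    have h6 : 1 - Real.exp (-(2 * (lam / (k:ℝ)))) ≤ 2 * (lam / (k:ℝ)) := by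
      have := Real.add_one_le_exp (-(2 * (lam / (k:ℝ))))
      linarith
    have h7 : lam / (k:ℝ) ≤ Real.sqrt (lam / (k:ℝ)) := by
      have h71 := mul_le_of_le_one_right (Real.sqrt_nonneg (lam / (k:ℝ)))
        (Real.sqrt_le_one.mpr hD1)
      rw [Real.mul_self_sqrt hD0.le] at h71
      exact h71
    have h8 : 0 ≤ Real.sqrt (lam / (k:ℝ)) := Real.sqrt_nonneg _
    linarith
end
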